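/- arXiv:2603.05055 — 4 statements merged into one kernel-verified Lean document; each statement's English description precedes it below -/
import Mathlib

section
/- Fix a normal modal logic Λ of Type A or Type B, and M ⊆ {◇,□}. It is decidable, given two finite M-simple sets of modal formulas Φ and Ψ, whether ML_Φ ≼^Λ ML_Ψ. -/
set_option maxHeartbeats 1000000

/-! ### Modal formulas -/

inductive MF : Type
  | var : ℕ → MF
  | neg : MF → MF
  | and : MF → MF → MF
  | or : MF → MF → MF
  | dia : MF → MF
  | box : MF → MF

namespace MF

/-- Implication `φ → ψ`, as the abbreviation `¬φ ∨ ψ`. -/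
def imp (φ ψ : MF) : MF := .or (.neg φ) ψ

/-- Bi-implication `φ ↔ ψ`. -/
def iff (φ ψ : MF) : MF := .and (φ.imp ψ) (ψ.imp φ)

/-- `⊥` abbreviates `p ∧ ¬p`. -/
def bot : MF := .and (.var 0) (.neg (.var 0))

/-- `⊤` abbreviates `p ∨ ¬p`. -/
def top : MF := .or (.var 0) (.neg (.var 0))

/-- A formula is purely propositional if it contains no modal operators. -/
def isProp : MF → Prop
  | .var _ => True
  | .neg φ => φ.isProp
  | .and φ ψ => φ.isProp ∧ ψ.isProp
  | .or φ ψ => φ.isProp ∧ ψ.isProp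
  | .dia _ => False
  | .box _ => False

/-- Boolean evaluation (meaningful for purely propositional formulas). -/
def propEval (v : ℕ → Bool) : MF → Bool
  | .var n => v n
  | .neg φ => !(propEval v φ)
  | .and φ ψ => propEval v φ && propEval v ψ
  | .or φ ψ => propEval v φ || propEval v ψ
  | .dia φ => propEval v φ
  | .box φ => propEval v φ

/-- Propositional tautologies. -/
def isTautology (φ : MF) : Prop := φ.isProp ∧ ∀ v, φ.propEval v = true

/-- Uniform substitution. -/
def subst (σ : ℕ → MF) : MF → MF
  | .var n => σ n
  | .neg φ => .neg (φ.subst σ)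
  | .and φ ψ => .and (φ.subst σ) (ψ.subst σ)
  | .or φ ψ => .or (φ.subst σ) (ψ.subst σ)
  | .dia φ => .dia (φ.subst σ)
  | .box φ => .box (φ.subst σ)

/-- The set of propositional variables occurring in a formula. -/
def vars : MF → Set ℕ
  | .var n => {n}
  | .neg φ => φ.vars
  | .and φ ψ => φ.vars ∪ ψ.vars
  | .or φ ψ => φ.vars ∪ ψ.vars
  | .dia φ => φ.vars
  | .box φ => φ.vars

/-- Kripke satisfaction. -/
def sat {W : Type} (R : W → W → Prop) (V : ℕ → W → Prop) : MF → W → Prop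
  | .var n, w => V n w
  | .neg φ, w => ¬ sat R V φ w
  | .and φ ψ, w => sat R V φ w ∧ sat R V ψ w
  | .or φ ψ, w => sat R V φ w ∨ sat R V ψ w
  | .dia φ, w => ∃ u, R w u ∧ sat R V φ u
  | .box φ, w => ∀ u, R w u → sat R V φ u

/-- `◇^n φ`. -/
def diaIter : ℕ → MF → MF
  | 0, φ => φ
  | n + 1, φ => .dia (diaIter n φ)

/-- `□^n φ`. -/
def boxIter : ℕ → MF → MF
  | 0, φ => φ
  | n + 1, φ => .box (boxIter n φ)

/-- `◇^{≤n} φ`, the disjunction of `◇^k φ` for `0 ≤ k ≤ n`. -/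
def diaLe : ℕ → MF → MF
  | 0, φ => φ
  | n + 1, φ => .or (diaLe n φ) (diaIter (n + 1) φ)

/-- An injective numeric encoding of modal formulas. -/
def encodeMF : MF → ℕ
  | .var n => Nat.pair 0 n
  | .neg φ => Nat.pair 1 φ.encodeMF
  | .and φ ψ => Nat.pair 2 (Nat.pair φ.encodeMF ψ.encodeMF)
  | .or φ ψ => Nat.pair 3 (Nat.pair φ.encodeMF ψ.encodeMF)
  | .dia φ => Nat.pair 4 φ.encodeMF
  | .box φ => Nat.pair 5 φ.encodeMF

end MF

/-- A normal modal logic. -/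
structure NormalLogic (Λ : Set MF) : Prop where
  taut : ∀ φ, φ.isTautology → φ ∈ Λ
  axK : ∀ φ ψ, ((MF.box (φ.imp ψ)).imp ((MF.box φ).imp (MF.box ψ))) ∈ Λ
  dual : ∀ φ, ((MF.dia φ).iff (MF.neg (MF.box (MF.neg φ)))) ∈ Λ
  mp : ∀ φ ψ, φ.imp ψ ∈ Λ → φ ∈ Λ → ψ ∈ Λ
  usubst : ∀ φ (σ : ℕ → MF), φ ∈ Λ → φ.subst σ ∈ Λ
  nec : ∀ φ, φ ∈ Λ → MF.box φ ∈ Λ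

/-- Validity on the frame `F_⊙` consisting of a single reflexive world. -/
def validOnReflPoint (φ : MF) : Prop :=
  ∀ V : ℕ → Prop, MF.sat (W := Unit) (fun _ _ => True) (fun n _ => V n) φ ()

/-- Validity on the frame `F_•` consisting of a single irreflexive world. -/
def validOnIrreflPoint (φ : MF) : Prop :=
  ∀ V : ℕ → Prop, MF.sat (W := Unit) (fun _ _ => False) (fun n _ => V n) φ ()

/-- Type A: `F_⊙ ⊨ Λ`. -/
def TypeA (Λ : Set MF) : Prop := ∀ φ ∈ Λ, validOnReflPoint φ

/-- Type B: `F_• ⊨ Λ` and `Λ ⊢ □^n ⊥` for some `n ≥ 1`. -/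
def TypeB (Λ : Set MF) : Prop :=
  (∀ φ ∈ Λ, validOnIrreflPoint φ) ∧ ∃ n ≥ 1, MF.boxIter n MF.bot ∈ Λ

/-- Type C: `F_• ⊨ Λ`, `Λ ⊬ □^n ⊥` for all `n ≥ 1`, `Λ ⊢ ◇^{≤n} □⊥` for some `n ≥ 1`. -/
def TypeC (Λ : Set MF) : Prop :=
  (∀ φ ∈ Λ, validOnIrreflPoint φ) ∧ (∀ n ≥ 1, MF.boxIter n MF.bot ∉ Λ) ∧
    ∃ n ≥ 1, MF.diaLe n (MF.box MF.bot) ∈ Λ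

/-- The (expansions of the) fragment `ML_Φ`: the smallest set of modal formulas containing
all propositional variables and closed under applying the connectives given by the formulas in
`Φ` (i.e., substituting fragment formulas into a member of `Φ`). -/
inductive MLFrag (Φ : Set MF) : MF → Prop
  | var (n : ℕ) : MLFrag Φ (MF.var n)
  | app (φ : MF) (hφ : φ ∈ Φ) (σ : ℕ → MF) (hσ : ∀ n, MLFrag Φ (σ n)) :
      MLFrag Φ (φ.subst σ)

/-- Expressive containment `ML_Φ ≼^Λ ML_Ψ`. -/
def exprLe (Λ : Set MF) (Φ Ψ : Set MF) : Prop :=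
  ∀ φ, MLFrag Φ φ → ∃ ψ, MLFrag Ψ ψ ∧ (φ.iff ψ) ∈ Λ

/-- Expressive equivalence with respect to `Λ`. -/
def exprEq (Λ : Set MF) (Φ Ψ : Set MF) : Prop := exprLe Λ Φ Ψ ∧ exprLe Λ Ψ Φ

/-- The minimal normal modal logic `K`: (semantically) the set of formulas valid in all
Kripke models. -/
def KLogic : Set MF :=
  {φ | ∀ (W : Type) (R : W → W → Prop) (V : ℕ → W → Prop) (w : W), MF.sat R V φ w}

/-! ### Boolean functions and clones -/

/-- A Boolean function of positive arity. -/
structure BFun : Type where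
  arity : ℕ
  arity_pos : 0 < arity
  eval : (Fin arity → Bool) → Bool

/-- A Boolean clone: a set of Boolean functions containing all projections and
closed under composition. -/
def IsClone (C : Set BFun) : Prop :=
  (∀ (n : ℕ) (hn : 0 < n) (k : Fin n), (⟨n, hn, fun v => v k⟩ : BFun) ∈ C) ∧
  (∀ f ∈ C, ∀ (m : ℕ) (hm : 0 < m) (g : Fin (BFun.arity f) → (Fin m → Bool) → Bool),
    (∀ i, (⟨m, hm, g i⟩ : BFun) ∈ C) →
    (⟨m, hm, fun v => f.eval (fun i => g i v)⟩ : BFun) ∈ C)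

/-- The clone generated by a set of Boolean functions. -/
def cloneGen (O : Set BFun) : Set BFun := ⋂₀ {C : Set BFun | IsClone C ∧ O ⊆ C}

/-- `O ≼ O'`: the clone generated by `O` is contained in the clone generated by `O'`. -/
def cloneLe (O O' : Set BFun) : Prop := cloneGen O ⊆ cloneGen O'

/-- The constant-true unary Boolean function. -/
def bfTop : BFun := ⟨1, Nat.one_pos, fun _ => true⟩
/-- The constant-false unary Boolean function. -/
def bfBot : BFun := ⟨1, Nat.one_pos, fun _ => false⟩
/-- Negation. -/
def bfNot : BFun := ⟨1, Nat.one_pos, fun v => !(v 0)⟩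
/-- Binary conjunction. -/
def bfAnd : BFun := ⟨2, Nat.succ_pos 1, fun v => v 0 && v 1⟩
/-- Binary disjunction. -/
def bfOr : BFun := ⟨2, Nat.succ_pos 1, fun v => v 0 || v 1⟩
/-- Ternary exclusive or `x ⊕ y ⊕ z`. -/
def bf3Xor : BFun := ⟨3, Nat.succ_pos 2, fun v => (v 0).xor ((v 1).xor (v 2))⟩
/-- `oxor(x,y,z) = x ∨ (y ⊕ z)`. -/
def bfOxor : BFun := ⟨3, Nat.succ_pos 2, fun v => v 0 || ((v 1).xor (v 2))⟩
/-- `aimp(x,y,z) = x ∧ (y → z)`. -/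
def bfAimp : BFun := ⟨3, Nat.succ_pos 2, fun v => v 0 && (!(v 1) || v 2)⟩

/-- The (purely propositional) formula `φ` defines the Boolean function `f`. -/
def definesBF (φ : MF) (f : BFun) : Prop :=
  φ.isProp ∧ ∀ v : ℕ → Bool, φ.propEval v = f.eval (fun i => v i.val)

/-- The generating set of formulas of the simple fragment `ML_{M ∪ O}`, where
`M ⊆ {◇,□}` is specified by the two Booleans `hd` (for `◇`) and `hb` (for `□`). -/
def MOgen (hd hb : Bool) (O : Set BFun) : Set MF :=
  {φ | (hd = true ∧ φ = MF.dia (MF.var 0)) ∨ (hb = true ∧ φ = MF.box (MF.var 0)) ∨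
    ∃ f ∈ O, definesBF φ f}

/-- `Clos^Λ_M(O)`: the set of Boolean functions `f` such that some propositional formula
defining `f` is `Λ`-equivalent to some `ML_{M ∪ O}`-formula. -/
def Clos (Λ : Set MF) (hd hb : Bool) (O : Set BFun) : Set BFun :=
  {f | ∃ φ ψ : MF, definesBF φ f ∧ MLFrag (MOgen hd hb O) ψ ∧ (φ.iff ψ) ∈ Λ}

/-- `β(Φ)`: the set of Boolean functions defined by propositional formulas in `Φ`. -/
def betaBF (Φ : Set MF) : Set BFun := {f | ∃ φ ∈ Φ, definesBF φ f}

/-- A set of modal formulas is simple if each member is `◇x`, `□x`, or purely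
propositional. -/
def IsSimpleSet (Φ : Set MF) : Prop :=
  ∀ φ ∈ Φ, (∃ n, φ = MF.dia (MF.var n)) ∨ (∃ n, φ = MF.box (MF.var n)) ∨ φ.isProp

/-- `Φ` is `M`-simple (with `M` given by `hd`, `hb`): simple, and the modal operators
among its members are exactly those in `M`. -/
def IsMSimpleSet (hd hb : Bool) (Φ : Set MF) : Prop :=
  IsSimpleSet Φ ∧ ((∃ n, MF.dia (MF.var n) ∈ Φ) ↔ hd = true) ∧
    ((∃ n, MF.box (MF.var n) ∈ Φ) ↔ hb = true)

/-! ### Propositional fragments `PL_O` -/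

/-- Formulas of the propositional fragment `PL_O`. -/
inductive PLF (O : Set BFun) : Type
  | var : ℕ → PLF O
  | app : (f : BFun) → f ∈ O → (Fin f.arity → PLF O) → PLF O

namespace PLF

variable {O : Set BFun}

/-- Evaluation of a `PL_O`-formula under a truth assignment. -/
def eval (v : ℕ → Bool) : PLF O → Bool
  | .var n => v n
  | .app f _ args => f.eval (fun i => (args i).eval v)

/-- The variables occurring in a `PL_O`-formula. -/
def pvars : PLF O → Set ℕ
  | .var n => {n}
  | .app _ _ args => ⋃ i, (args i).pvars

/-- The set of subformulas of a `PL_O`-formula. -/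
def subf : PLF O → Set (PLF O)
  | .var n => {PLF.var n}
  | .app f h args => insert (PLF.app f h args) (⋃ i, (args i).subf)

/-- `|φ|_dag`: the number of distinct subformulas. -/
noncomputable def dagSize (φ : PLF O) : ℕ := φ.subf.ncard

/-- Equivalence of propositional formulas. -/
def equivPLF (φ ψ : PLF O) : Prop := ∀ v, φ.eval v = ψ.eval v

/-- `φ` fits the labeled example `(V, lab)`. -/
def fits (φ : PLF O) (e : (ℕ → Bool) × Bool) : Prop := φ.eval e.1 = e.2

end PLF

/-- `E` uniquely characterizes `φ` with respect to the class `L` of formulas. -/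
def uniqCharPL {O : Set BFun} (φ : PLF O) (L : Set (PLF O))
    (E : Set ((ℕ → Bool) × Bool)) : Prop :=
  (∀ e ∈ E, φ.fits e) ∧ ∀ ψ ∈ L, (∀ e ∈ E, ψ.fits e) → φ.equivPLF ψ

/-! ### Concept classes and PC-reductions -/

/-- A concept `c` fits the labeled example `(e, lab)`. -/
def ccFits {C : Type*} {E : Type*} (l : C → Set E) (c : C) (e : E × Bool) : Prop :=
  e.1 ∈ l c ↔ e.2 = true

/-- `S` uniquely characterizes the concept `c` within the concept class given by `l`. -/
def ccUniqChar {C : Type*} {E : Type*} (l : C → Set E) (c : C) (S : Set (E × Bool)) : Prop :=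
  (∀ e ∈ S, ccFits l c e) ∧ ∀ c', (∀ e ∈ S, ccFits l c' e) → l c' = l c

/-- A PC-reduction between concept classes. -/
structure PCRed {C1 : Type*} {E1 : Type*} {C2 : Type*} {E2 : Type*}
    (l1 : C1 → Set E1) (l2 : C2 → Set E2) where
  fc : C1 → C2
  he : E1 → E2
  cond1 : ∀ c e, e ∈ l1 c ↔ he e ∈ l2 (fc c)
  cond2 : ∀ e : E2, (∀ c, e ∈ l2 (fc c)) ∨ (∀ c, e ∉ l2 (fc c)) ∨
    ∃ e' : E1, {c | e ∈ l2 (fc c)} = {c | e' ∈ l1 c}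

/-- Extend an assignment on `PROP` to all variables (by `false` elsewhere). -/
def extAssign (PROP : Finset ℕ) (v : {x // x ∈ PROP} → Bool) : ℕ → Bool :=
  fun n => if h : n ∈ PROP then v ⟨n, h⟩ else false

/-- The concept class `PL_O[PROP]`: concepts are `PL_O`-formulas with variables in `PROP`,
examples are truth assignments on `PROP`. -/
def plSem (O : Set BFun) (PROP : Finset ℕ) :
    {φ : PLF O // φ.pvars ⊆ ↑PROP} → Set ({x // x ∈ PROP} → Bool) :=
  fun φ => {v | φ.1.eval (extAssign PROP v) = true}

/-! ### Simple modal fragments as syntax, and finite pointed Kripke models -/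

/-- Formulas of the simple modal fragment `ML_{M ∪ O}` (as a syntax): Boolean connectives
from `O`, plus `◇` if `hd` and `□` if `hb`. -/
inductive MLF (O : Set BFun) (hd hb : Bool) : Type
  | var : ℕ → MLF O hd hb
  | app : (f : BFun) → f ∈ O → (Fin f.arity → MLF O hd hb) → MLF O hd hb
  | dia : hd = true → MLF O hd hb → MLF O hd hb
  | box : hb = true → MLF O hd hb → MLF O hd hb

/-- Propositional application of a Boolean function to propositions. -/
def BFun.evalP (f : BFun) (P : Fin f.arity → Prop) : Prop :=
  f.eval (fun i => @decide (P i) (Classical.propDecidable _)) = true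

namespace MLF

variable {O : Set BFun} {hd hb : Bool}

/-- Kripke satisfaction for simple-fragment formulas. -/
def msat {W : Type} (R : W → W → Prop) (V : ℕ → W → Prop) :
    MLF O hd hb → W → Prop
  | .var n, w => V n w
  | .app f _ args, w => f.evalP (fun i => msat R V (args i) w)
  | .dia _ φ, w => ∃ u, R w u ∧ msat R V φ u
  | .box _ φ, w => ∀ u, R w u → msat R V φ u

/-- Variables of a simple-fragment formula. -/
def mvars : MLF O hd hb → Set ℕ
  | .var n => {n}
  | .app _ _ args => ⋃ i, (args i).mvars
  | .dia _ φ => φ.mvars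
  | .box _ φ => φ.mvars

end MLF

/-- A finite pointed Kripke model. -/
structure FPModel : Type 1 where
  W : Type
  fin : Finite W
  R : W → W → Prop
  V : ℕ → W → Prop
  pt : W

/-- The concept class `ML_{O,∘}[{p}]` (with `p` the variable `0`): concepts are
simple-fragment formulas over the single variable `p`, examples are finite pointed
Kripke models. -/
def mlSem (O : Set BFun) (hd hb : Bool) :
    {φ : MLF O hd hb // φ.mvars ⊆ {0}} → Set FPModel :=
  fun φ => {M | MLF.msat M.R M.V φ.1 M.pt}

/-- Satisfaction of a modal formula in a finite pointed Kripke model. -/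
def msatMF (M : FPModel) (φ : MF) : Prop := MF.sat M.R M.V φ M.pt

/-- A modal formula fits a labeled example (a finite pointed model with a label). -/
def fitsMF (φ : MF) (e : FPModel × Bool) : Prop := msatMF e.1 φ ↔ e.2 = true

/-- `K`-equivalence of modal formulas: truth at the same worlds of all Kripke models. -/
def KequivMF (φ ψ : MF) : Prop :=
  ∀ (W : Type) (R : W → W → Prop) (V : ℕ → W → Prop) (w : W),
    MF.sat R V φ w ↔ MF.sat R V ψ w

/-- `E` uniquely characterizes `φ` relative to the fragment `L` (with respect to `K`). -/
def uniqCharMF (φ : MF) (L : Set MF) (E : Set (FPModel × Bool)) : Prop :=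
  (∀ e ∈ E, fitsMF φ e) ∧ ∀ ψ ∈ L, (∀ e ∈ E, fitsMF ψ e) → KequivMF φ ψ

/-- `ML_Φ[P]`: the fragment generated by `Φ`, restricted to variables in `P`. -/
def fragSimple (Φ : Set MF) (P : Set ℕ) : Set MF :=
  {φ | MLFrag Φ φ ∧ φ.vars ⊆ P}

/-- `ML_{M∪O}[P]`. -/
def fragMO (hd hb : Bool) (O : Set BFun) (P : Set ℕ) : Set MF :=
  fragSimple (MOgen hd hb O) P

/-- For a simple set `Φ`: the modal operators of `Φ` are among those specified by
`hd`, `hb`, and `β(Φ)` is contained in the clone generated by `O`. -/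
def simpleLeOps (Φ : Set MF) (O : Set BFun) (hd hb : Bool) : Prop :=
  ((∃ n, MF.dia (MF.var n) ∈ Φ) → hd = true) ∧
  ((∃ n, MF.box (MF.var n) ∈ Φ) → hb = true) ∧
  cloneGen (betaBF Φ) ⊆ cloneGen O

/-- Decoding of a natural number as a labeled example (a finite pointed Kripke model with
a Boolean label). -/
def decodeEx (c : ℕ) : FPModel × Bool :=
  match Denumerable.ofNat (ℕ × List (ℕ × ℕ) × List (ℕ × ℕ) × ℕ × ℕ) c with
  | (n, edges, val, pt, b) =>
    (⟨Fin (n + 1), inferInstance,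
      fun u v => (u.val, v.val) ∈ edges,
      fun k w => (k, w.val) ∈ val,
      ⟨pt % (n + 1), Nat.mod_lt pt (Nat.succ_pos n)⟩⟩, b % 2 == 1)

/-! ### Auxiliary development -/

namespace MF

theorem subst_var_eq (φ : MF) : φ.subst MF.var = φ := by
  induction φ <;> simp [subst, *]

theorem subst_subst (φ : MF) (σ τ : ℕ → MF) :
    (φ.subst σ).subst τ = φ.subst (fun n => (σ n).subst τ) := by
  induction φ <;> simp [subst, *]

theorem subst_imp (φ ψ : MF) (σ : ℕ → MF) :
    (φ.imp ψ).subst σ = (φ.subst σ).imp (ψ.subst σ) := rfl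

theorem subst_iff (φ ψ : MF) (σ : ℕ → MF) :
    (φ.iff ψ).subst σ = (φ.subst σ).iff (ψ.subst σ) := rfl

theorem propEval_subst (v : ℕ → Bool) (φ : MF) (σ : ℕ → MF) :
    propEval v (φ.subst σ) = propEval (fun n => propEval v (σ n)) φ := by
  induction φ <;> simp [subst, propEval, *]

theorem propEval_congr {v v' : ℕ → Bool} {φ : MF} (h : ∀ k ∈ φ.vars, v k = v' k) :
    propEval v φ = propEval v' φ := by
  induction φ with
  | var n => exact h n (by simp [vars])
  | neg φ ih => simp [propEval, ih (fun k hk => h k hk)]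
  | and φ ψ ih1 ih2 =>
    simp [propEval, ih1 (fun k hk => h k (Or.inl hk)), ih2 (fun k hk => h k (Or.inr hk))]
  | or φ ψ ih1 ih2 =>
    simp [propEval, ih1 (fun k hk => h k (Or.inl hk)), ih2 (fun k hk => h k (Or.inr hk))]
  | dia φ ih => simp [propEval, ih (fun k hk => h k hk)]
  | box φ ih => simp [propEval, ih (fun k hk => h k hk)]

theorem isProp_subst {φ : MF} (hφ : φ.isProp) {σ : ℕ → MF}
    (hσ : ∀ k ∈ φ.vars, (σ k).isProp) : (φ.subst σ).isProp := by
  induction φ with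
  | var n => exact hσ n (by simp [vars])
  | neg φ ih => exact ih hφ hσ
  | and φ ψ ih1 ih2 =>
    exact ⟨ih1 hφ.1 (fun k hk => hσ k (Or.inl hk)), ih2 hφ.2 (fun k hk => hσ k (Or.inr hk))⟩
  | or φ ψ ih1 ih2 =>
    exact ⟨ih1 hφ.1 (fun k hk => hσ k (Or.inl hk)), ih2 hφ.2 (fun k hk => hσ k (Or.inr hk))⟩
  | dia φ ih => exact absurd hφ id
  | box φ ih => exact absurd hφ id

theorem isProp_subst_rev {φ : MF} (hφ : φ.isProp) {σ : ℕ → MF}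
    (h : (φ.subst σ).isProp) : ∀ k ∈ φ.vars, (σ k).isProp := by
  induction φ with
  | var n => intro k hk; rcases hk with rfl; exact h
  | neg φ ih => exact ih hφ h
  | and φ ψ ih1 ih2 =>
    intro k hk; rcases hk with hk | hk
    · exact ih1 hφ.1 h.1 k hk
    · exact ih2 hφ.2 h.2 k hk
  | or φ ψ ih1 ih2 =>
    intro k hk; rcases hk with hk | hk
    · exact ih1 hφ.1 h.1 k hk
    · exact ih2 hφ.2 h.2 k hk
  | dia φ ih => exact absurd hφ id
  | box φ ih => exact absurd hφ id

theorem mem_vars_subst {φ : MF} {σ : ℕ → MF} {k' : ℕ} (h : k' ∈ (φ.subst σ).vars) :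
    ∃ k ∈ φ.vars, k' ∈ (σ k).vars := by
  induction φ with
  | var n => exact ⟨n, by simp [vars], h⟩
  | neg φ ih => exact ih h
  | and φ ψ ih1 ih2 =>
    rcases h with h | h
    · obtain ⟨k, hk, h⟩ := ih1 h; exact ⟨k, Or.inl hk, h⟩
    · obtain ⟨k, hk, h⟩ := ih2 h; exact ⟨k, Or.inr hk, h⟩
  | or φ ψ ih1 ih2 =>
    rcases h with h | h
    · obtain ⟨k, hk, h⟩ := ih1 h; exact ⟨k, Or.inl hk, h⟩
    · obtain ⟨k, hk, h⟩ := ih2 h; exact ⟨k, Or.inr hk, h⟩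
  | dia φ ih => exact ih h
  | box φ ih => exact ih h

theorem propEval_iff_eq (v : ℕ → Bool) (φ ψ : MF) :
    (φ.iff ψ).propEval v = true ↔ φ.propEval v = ψ.propEval v := by
  simp only [iff, imp, propEval]
  cases h1 : φ.propEval v <;> cases h2 : ψ.propEval v <;> simp

theorem isProp_iff {φ ψ : MF} (h1 : φ.isProp) (h2 : ψ.isProp) : (φ.iff ψ).isProp :=
  ⟨⟨h1, h2⟩, ⟨h2, h1⟩⟩

end MF
/-! ### Hilbert toolkit for normal logics -/

namespace NormalLogic

variable {Λ : Set MF} (hΛ : NormalLogic Λ)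
include hΛ

theorem ofTaut {φ : MF} (hp : φ.isProp) (he : ∀ v, φ.propEval v = true) : φ ∈ Λ :=
  hΛ.taut φ ⟨hp, he⟩

/-- Instance of a 2-variable tautology pattern. -/
theorem pat2 {P : MF} (hP : P.isTautology) (φ ψ : MF) :
    P.subst (fun n => if n = 0 then φ else ψ) ∈ Λ :=
  hΛ.usubst P _ (hΛ.taut P hP)

theorem leq_refl (φ : MF) : φ.iff φ ∈ Λ := by
  have h := hΛ.usubst ((MF.var 0).iff (MF.var 0)) (fun _ => φ)
    (hΛ.taut _ ⟨by simp [MF.iff, MF.imp, MF.isProp],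
      by intro v; rw [MF.propEval_iff_eq]⟩)
  simpa [MF.subst_iff, MF.subst] using h

theorem leq_symm {φ ψ : MF} (h : φ.iff ψ ∈ Λ) : ψ.iff φ ∈ Λ := by
  have hpat : (((MF.var 0).iff (MF.var 1)).imp ((MF.var 1).iff (MF.var 0))).isTautology := by
    constructor
    · simp [MF.iff, MF.imp, MF.isProp]
    · intro v
      simp only [MF.iff, MF.imp, MF.propEval]
      cases v 0 <;> cases v 1 <;> rfl
  have h2 := hΛ.usubst _ (fun n => if n = 0 then φ else ψ) (hΛ.taut _ hpat)
  simp only [MF.subst_imp, MF.subst_iff, MF.subst, if_pos, if_neg] at h2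
  exact hΛ.mp _ _ (by simpa using h2) h

theorem leq_trans {φ ψ χ : MF} (h1 : φ.iff ψ ∈ Λ) (h2 : ψ.iff χ ∈ Λ) : φ.iff χ ∈ Λ := by
  have hpat : (((MF.var 0).iff (MF.var 1)).imp
      (((MF.var 1).iff (MF.var 2)).imp ((MF.var 0).iff (MF.var 2)))).isTautology := by
    constructor
    · simp [MF.iff, MF.imp, MF.isProp]
    · intro v
      simp only [MF.iff, MF.imp, MF.propEval]
      cases v 0 <;> cases v 1 <;> cases v 2 <;> rfl
  have h3 := hΛ.usubst _ (fun n => if n = 0 then φ else if n = 1 then ψ else χ)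
    (hΛ.taut _ hpat)
  simp only [MF.subst_imp, MF.subst_iff, MF.subst] at h3
  norm_num at h3
  exact hΛ.mp _ _ (hΛ.mp _ _ h3 h1) h2

theorem leq_neg {φ ψ : MF} (h : φ.iff ψ ∈ Λ) : (MF.neg φ).iff (MF.neg ψ) ∈ Λ := by
  have hpat : (((MF.var 0).iff (MF.var 1)).imp
      ((MF.neg (MF.var 0)).iff (MF.neg (MF.var 1)))).isTautology := by
    constructor
    · simp [MF.iff, MF.imp, MF.isProp]
    · intro v
      simp only [MF.iff, MF.imp, MF.propEval]
      cases v 0 <;> cases v 1 <;> rfl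
  have h2 := hΛ.usubst _ (fun n => if n = 0 then φ else ψ) (hΛ.taut _ hpat)
  simp only [MF.subst_imp, MF.subst_iff, MF.subst] at h2
  norm_num at h2
  exact hΛ.mp _ _ h2 h

theorem leq_and {φ φ' ψ ψ' : MF} (h1 : φ.iff φ' ∈ Λ) (h2 : ψ.iff ψ' ∈ Λ) :
    (MF.and φ ψ).iff (MF.and φ' ψ') ∈ Λ := by
  have hpat : (((MF.var 0).iff (MF.var 1)).imp (((MF.var 2).iff (MF.var 3)).imp
      ((MF.and (MF.var 0) (MF.var 2)).iff (MF.and (MF.var 1) (MF.var 3))))).isTautology := by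
    constructor
    · simp [MF.iff, MF.imp, MF.isProp]
    · intro v
      simp only [MF.iff, MF.imp, MF.propEval]
      cases v 0 <;> cases v 1 <;> cases v 2 <;> cases v 3 <;> rfl
  have h3 := hΛ.usubst _
    (fun n => if n = 0 then φ else if n = 1 then φ' else if n = 2 then ψ else ψ')
    (hΛ.taut _ hpat)
  simp only [MF.subst_imp, MF.subst_iff, MF.subst] at h3
  norm_num at h3
  exact hΛ.mp _ _ (hΛ.mp _ _ h3 h1) h2

theorem leq_or {φ φ' ψ ψ' : MF} (h1 : φ.iff φ' ∈ Λ) (h2 : ψ.iff ψ' ∈ Λ) :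
    (MF.or φ ψ).iff (MF.or φ' ψ') ∈ Λ := by
  have hpat : (((MF.var 0).iff (MF.var 1)).imp (((MF.var 2).iff (MF.var 3)).imp
      ((MF.or (MF.var 0) (MF.var 2)).iff (MF.or (MF.var 1) (MF.var 3))))).isTautology := by
    constructor
    · simp [MF.iff, MF.imp, MF.isProp]
    · intro v
      simp only [MF.iff, MF.imp, MF.propEval]
      cases v 0 <;> cases v 1 <;> cases v 2 <;> cases v 3 <;> rfl
  have h3 := hΛ.usubst _
    (fun n => if n = 0 then φ else if n = 1 then φ' else if n = 2 then ψ else ψ')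
    (hΛ.taut _ hpat)
  simp only [MF.subst_imp, MF.subst_iff, MF.subst] at h3
  norm_num at h3
  exact hΛ.mp _ _ (hΛ.mp _ _ h3 h1) h2

theorem leq_of_thms {φ ψ : MF} (h1 : φ ∈ Λ) (h2 : ψ ∈ Λ) : φ.iff ψ ∈ Λ := by
  have hpat : ((MF.var 0).imp ((MF.var 1).imp ((MF.var 0).iff (MF.var 1)))).isTautology := by
    constructor
    · simp [MF.iff, MF.imp, MF.isProp]
    · intro v
      simp only [MF.iff, MF.imp, MF.propEval]
      cases v 0 <;> cases v 1 <;> rfl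
  have h3 := hΛ.usubst _ (fun n => if n = 0 then φ else ψ) (hΛ.taut _ hpat)
  simp only [MF.subst_imp, MF.subst_iff, MF.subst] at h3
  norm_num at h3
  exact hΛ.mp _ _ (hΛ.mp _ _ h3 h1) h2

theorem leq_of_negthms {φ ψ : MF} (h1 : MF.neg φ ∈ Λ) (h2 : MF.neg ψ ∈ Λ) :
    φ.iff ψ ∈ Λ := by
  have hpat : ((MF.neg (MF.var 0)).imp ((MF.neg (MF.var 1)).imp
      ((MF.var 0).iff (MF.var 1)))).isTautology := by
    constructor
    · simp [MF.iff, MF.imp, MF.isProp]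
    · intro v
      simp only [MF.iff, MF.imp, MF.propEval]
      cases v 0 <;> cases v 1 <;> rfl
  have h3 := hΛ.usubst _ (fun n => if n = 0 then φ else ψ) (hΛ.taut _ hpat)
  simp only [MF.subst_imp, MF.subst_iff, MF.subst] at h3
  norm_num at h3
  exact hΛ.mp _ _ (hΛ.mp _ _ h3 h1) h2

theorem imp_of_iff {φ ψ : MF} (h : φ.iff ψ ∈ Λ) : φ.imp ψ ∈ Λ := by
  have hpat : (((MF.var 0).iff (MF.var 1)).imp ((MF.var 0).imp (MF.var 1))).isTautology := by
    constructor
    · simp [MF.iff, MF.imp, MF.isProp]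
    · intro v
      simp only [MF.iff, MF.imp, MF.propEval]
      cases v 0 <;> cases v 1 <;> rfl
  have h2 := hΛ.usubst _ (fun n => if n = 0 then φ else ψ) (hΛ.taut _ hpat)
  simp only [MF.subst_imp, MF.subst_iff, MF.subst] at h2
  norm_num at h2
  exact hΛ.mp _ _ h2 h

theorem imp_of_iff' {φ ψ : MF} (h : φ.iff ψ ∈ Λ) : ψ.imp φ ∈ Λ :=
  hΛ.imp_of_iff (hΛ.leq_symm h)

theorem imp_trans {φ ψ χ : MF} (h1 : φ.imp ψ ∈ Λ) (h2 : ψ.imp χ ∈ Λ) : φ.imp χ ∈ Λ := by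
  have hpat : (((MF.var 0).imp (MF.var 1)).imp
      (((MF.var 1).imp (MF.var 2)).imp ((MF.var 0).imp (MF.var 2)))).isTautology := by
    constructor
    · simp [MF.imp, MF.isProp]
    · intro v
      simp only [MF.imp, MF.propEval]
      cases v 0 <;> cases v 1 <;> cases v 2 <;> rfl
  have h3 := hΛ.usubst _ (fun n => if n = 0 then φ else if n = 1 then ψ else χ)
    (hΛ.taut _ hpat)
  simp only [MF.subst_imp, MF.subst] at h3
  norm_num at h3
  exact hΛ.mp _ _ (hΛ.mp _ _ h3 h1) h2

theorem box_imp {φ ψ : MF} (h : φ.imp ψ ∈ Λ) : (MF.box φ).imp (MF.box ψ) ∈ Λ :=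
  hΛ.mp _ _ (hΛ.axK φ ψ) (hΛ.nec _ h)

theorem leq_box {φ ψ : MF} (h : φ.iff ψ ∈ Λ) : (MF.box φ).iff (MF.box ψ) ∈ Λ := by
  have hpat : (((MF.var 0).imp (MF.var 1)).imp (((MF.var 1).imp (MF.var 0)).imp
      ((MF.var 0).iff (MF.var 1)))).isTautology := by
    constructor
    · simp [MF.iff, MF.imp, MF.isProp]
    · intro v
      simp only [MF.iff, MF.imp, MF.propEval]
      cases v 0 <;> cases v 1 <;> rfl
  have h3 := hΛ.usubst _ (fun n => if n = 0 then MF.box φ else MF.box ψ) (hΛ.taut _ hpat)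
  simp only [MF.subst_imp, MF.subst_iff, MF.subst] at h3
  norm_num at h3
  exact hΛ.mp _ _ (hΛ.mp _ _ h3 (hΛ.box_imp (hΛ.imp_of_iff h)))
    (hΛ.box_imp (hΛ.imp_of_iff' h))

theorem leq_dia {φ ψ : MF} (h : φ.iff ψ ∈ Λ) : (MF.dia φ).iff (MF.dia ψ) ∈ Λ := by
  refine hΛ.leq_trans (hΛ.dual φ) (hΛ.leq_trans ?_ (hΛ.leq_symm (hΛ.dual ψ)))
  exact hΛ.leq_neg (hΛ.leq_box (hΛ.leq_neg h))

/-- Congruence of `Λ`-equivalence under substitution into a propositional formula. -/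
theorem propCong {θ : MF} (hθ : θ.isProp) {σ σ' : ℕ → MF}
    (h : ∀ k ∈ θ.vars, (σ k).iff (σ' k) ∈ Λ) :
    (θ.subst σ).iff (θ.subst σ') ∈ Λ := by
  induction θ with
  | var n => exact h n (by simp [MF.vars])
  | neg θ ih => exact hΛ.leq_neg (ih hθ h)
  | and θ₁ θ₂ ih1 ih2 =>
    exact hΛ.leq_and (ih1 hθ.1 (fun k hk => h k (Or.inl hk)))
      (ih2 hθ.2 (fun k hk => h k (Or.inr hk)))
  | or θ₁ θ₂ ih1 ih2 =>
    exact hΛ.leq_or (ih1 hθ.1 (fun k hk => h k (Or.inl hk)))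
      (ih2 hθ.2 (fun k hk => h k (Or.inr hk)))
  | dia θ ih => exact absurd hθ id
  | box θ ih => exact absurd hθ id

theorem boxIter_imp {φ ψ : MF} (h : φ.imp ψ ∈ Λ) (k : ℕ) :
    (MF.boxIter k φ).imp (MF.boxIter k ψ) ∈ Λ := by
  induction k with
  | zero => exact h
  | succ k ih => exact hΛ.box_imp ih

theorem bot_imp (φ : MF) : MF.bot.imp φ ∈ Λ := by
  have hpat : (MF.bot.imp (MF.var 1)).isTautology := by
    constructor
    · simp [MF.bot, MF.imp, MF.isProp]
    · intro v
      simp only [MF.bot, MF.imp, MF.propEval]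
      cases v 0 <;> cases v 1 <;> rfl
  have h2 := hΛ.usubst _ (fun n => if n = 0 then MF.var 0 else φ) (hΛ.taut _ hpat)
  simp only [MF.subst_imp, MF.subst, MF.bot] at h2
  norm_num at h2
  exact h2

theorem boxIter_of_bot {n : ℕ} (h : MF.boxIter n MF.bot ∈ Λ) (φ : MF) :
    MF.boxIter n φ ∈ Λ :=
  hΛ.mp _ _ (hΛ.boxIter_imp (hΛ.bot_imp φ) n) h

theorem boxIter_neg_imp_neg_diaIter (φ : MF) (k : ℕ) :
    (MF.boxIter k (MF.neg φ)).imp (MF.neg (MF.diaIter k φ)) ∈ Λ := by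
  induction k with
  | zero =>
    have hpat : ((MF.neg (MF.var 0)).imp (MF.neg (MF.var 0))).isTautology := by
      constructor
      · simp [MF.imp, MF.isProp]
      · intro v
        simp only [MF.imp, MF.propEval]
        cases v 0 <;> rfl
    have h2 := hΛ.usubst _ (fun _ => φ) (hΛ.taut _ hpat)
    simpa [MF.subst_imp, MF.subst, MF.boxIter, MF.diaIter] using h2
  | succ k ih =>
    have h1 : (MF.boxIter (k+1) (MF.neg φ)).imp (MF.box (MF.neg (MF.diaIter k φ))) ∈ Λ :=
      hΛ.box_imp ih
    have h2 : (MF.box (MF.neg (MF.diaIter k φ))).imp (MF.neg (MF.dia (MF.diaIter k φ))) ∈ Λ := by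
      have hd := hΛ.dual (MF.diaIter k φ)
      have hpat : (((MF.var 0).iff (MF.neg (MF.var 1))).imp
          ((MF.var 1).imp (MF.neg (MF.var 0)))).isTautology := by
        constructor
        · simp [MF.iff, MF.imp, MF.isProp]
        · intro v
          simp only [MF.iff, MF.imp, MF.propEval]
          cases v 0 <;> cases v 1 <;> rfl
      have h3 := hΛ.usubst _ (fun n => if n = 0 then MF.dia (MF.diaIter k φ)
        else MF.box (MF.neg (MF.diaIter k φ))) (hΛ.taut _ hpat)
      simp only [MF.subst_imp, MF.subst_iff, MF.subst] at h3
      norm_num at h3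
      exact hΛ.mp _ _ h3 hd
    exact hΛ.imp_trans h1 h2

theorem neg_diaIter_of_bot {n : ℕ} (h : MF.boxIter n MF.bot ∈ Λ) (φ : MF) :
    MF.neg (MF.diaIter n φ) ∈ Λ :=
  hΛ.mp _ _ (hΛ.boxIter_neg_imp_neg_diaIter φ n) (hΛ.boxIter_of_bot h (MF.neg φ))

end NormalLogic
/-! ### Semantics on the one-point frames, erasures -/

namespace MF

theorem sat_refl_iff (v : ℕ → Bool) (γ : MF) :
    MF.sat (W := Unit) (fun _ _ => True) (fun n _ => v n = true) γ () ↔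
      γ.propEval v = true := by
  induction γ with
  | var n => simp [sat, propEval]
  | neg γ ih => simp [sat, propEval, ih]
  | and γ₁ γ₂ ih1 ih2 => simp [sat, propEval, ih1, ih2]
  | or γ₁ γ₂ ih1 ih2 => simp [sat, propEval, ih1, ih2]
  | dia γ ih =>
    simp only [MF.sat, MF.propEval, true_and]
    constructor
    · rintro ⟨⟨⟩, h⟩; exact ih.mp h
    · intro h; exact ⟨(), ih.mpr h⟩
  | box γ ih =>
    simp only [MF.sat, MF.propEval]
    constructor
    · intro h; exact ih.mp (h () trivial)
    · intro h u _; exact ih.mpr h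

/-- Erasure for Type A: delete all modal operators. -/
def erA : MF → MF
  | .var n => .var n
  | .neg φ => .neg (erA φ)
  | .and φ ψ => .and (erA φ) (erA ψ)
  | .or φ ψ => .or (erA φ) (erA ψ)
  | .dia φ => erA φ
  | .box φ => erA φ

theorem erA_isProp (γ : MF) : (erA γ).isProp := by
  induction γ <;> simp [erA, isProp, *]

theorem propEval_erA (v : ℕ → Bool) (γ : MF) : (erA γ).propEval v = γ.propEval v := by
  induction γ <;> simp [erA, propEval, *]

theorem erA_subst_prop {θ : MF} (hθ : θ.isProp) (σ : ℕ → MF) :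
    erA (θ.subst σ) = θ.subst (fun n => erA (σ n)) := by
  induction θ with
  | var n => rfl
  | neg θ ih => simp [subst, erA, ih hθ]
  | and θ₁ θ₂ ih1 ih2 => simp [subst, erA, ih1 hθ.1, ih2 hθ.2]
  | or θ₁ θ₂ ih1 ih2 => simp [subst, erA, ih1 hθ.1, ih2 hθ.2]
  | dia θ ih => exact absurd hθ id
  | box θ ih => exact absurd hθ id

/-- Erasure for Type B: `◇φ ↦ ⊥`, `□φ ↦ ⊤`. -/
def erB : MF → MF
  | .var n => .var n
  | .neg φ => .neg (erB φ)
  | .and φ ψ => .and (erB φ) (erB ψ)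
  | .or φ ψ => .or (erB φ) (erB ψ)
  | .dia _ => MF.bot
  | .box _ => MF.top

theorem erB_isProp (γ : MF) : (erB γ).isProp := by
  induction γ <;> simp [erB, isProp, bot, top, *]

theorem erB_subst_prop {θ : MF} (hθ : θ.isProp) (σ : ℕ → MF) :
    erB (θ.subst σ) = θ.subst (fun n => erB (σ n)) := by
  induction θ with
  | var n => rfl
  | neg θ ih => simp [subst, erB, ih hθ]
  | and θ₁ θ₂ ih1 ih2 => simp [subst, erB, ih1 hθ.1, ih2 hθ.2]
  | or θ₁ θ₂ ih1 ih2 => simp [subst, erB, ih1 hθ.1, ih2 hθ.2]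
  | dia θ ih => exact absurd hθ id
  | box θ ih => exact absurd hθ id

theorem sat_irrefl_iff (v : ℕ → Bool) (γ : MF) :
    MF.sat (W := Unit) (fun _ _ => False) (fun n _ => v n = true) γ () ↔
      (erB γ).propEval v = true := by
  induction γ with
  | var n => simp [sat, erB, propEval]
  | neg γ ih => simp [sat, erB, propEval, ih]
  | and γ₁ γ₂ ih1 ih2 => simp [sat, erB, propEval, ih1, ih2]
  | or γ₁ γ₂ ih1 ih2 => simp [sat, erB, propEval, ih1, ih2]
  | dia γ ih => simp [sat, erB, propEval, bot]
  | box γ ih => simp [sat, erB, propEval, top]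

end MF

/-- Terms over the propositional members of `Ψ`, variables, and optionally the
constants `⊤` and `⊥`. -/
inductive Tm (Ψ : Set MF) (cT cB : Bool) : MF → Prop
  | var (n : ℕ) : Tm Ψ cT cB (MF.var n)
  | top : cT = true → Tm Ψ cT cB MF.top
  | bot : cB = true → Tm Ψ cT cB MF.bot
  | app (θ : MF) (hθ : θ ∈ Ψ) (hp : θ.isProp) (σ : ℕ → MF)
      (h : ∀ k ∈ θ.vars, Tm Ψ cT cB (σ k)) : Tm Ψ cT cB (θ.subst σ)

theorem Tm.isProp {Ψ : Set MF} {cT cB : Bool} {t : MF} (h : Tm Ψ cT cB t) : t.isProp := by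
  induction h with
  | var n => trivial
  | top _ => exact ⟨trivial, trivial⟩
  | bot _ => exact ⟨trivial, trivial⟩
  | app θ hθ hp σ h ih => exact MF.isProp_subst hp ih

/-- Members of a set are in its fragment. -/
theorem MLFrag.of_mem {Φ : Set MF} {φ : MF} (h : φ ∈ Φ) : MLFrag Φ φ := by
  have := MLFrag.app (Φ := Φ) φ h MF.var (fun n => MLFrag.var n)
  rwa [MF.subst_var_eq] at this
/-! ### Characterization of expressive containment -/

theorem MF.erB_prop_eq {α : MF} (hp : α.isProp) : MF.erB α = α := by
  induction α with
  | var n => rfl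
  | neg α ih => simp [MF.erB, ih hp]
  | and α β ih1 ih2 => simp [MF.erB, ih1 hp.1, ih2 hp.2]
  | or α β ih1 ih2 => simp [MF.erB, ih1 hp.1, ih2 hp.2]
  | dia α ih => exact absurd hp id
  | box α ih => exact absurd hp id

theorem MF.erB_iff (α β : MF) : MF.erB (α.iff β) = (MF.erB α).iff (MF.erB β) := rfl

theorem Tm_of_mlfrag_A {Ψ : Set MF} (hΨ : IsSimpleSet Ψ) {ψ : MF} (h : MLFrag Ψ ψ) :
    Tm Ψ false false (MF.erA ψ) := by
  induction h with
  | var n => exact Tm.var n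
  | app θ hθ σ hσ ih =>
    rcases hΨ θ hθ with ⟨m, rfl⟩ | ⟨m, rfl⟩ | hp
    · simpa [MF.subst, MF.erA] using ih m
    · simpa [MF.subst, MF.erA] using ih m
    · rw [MF.erA_subst_prop hp]
      exact Tm.app θ hθ hp _ (fun k _ => ih k)

theorem Tm_of_mlfrag_B {hd hb : Bool} {Ψ : Set MF} (hΨ : IsMSimpleSet hd hb Ψ) {ψ : MF}
    (h : MLFrag Ψ ψ) : Tm Ψ hb hd (MF.erB ψ) := by
  induction h with
  | var n => exact Tm.var n
  | app θ hθ σ hσ ih =>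
    rcases hΨ.1 θ hθ with ⟨m, rfl⟩ | ⟨m, rfl⟩ | hp
    · have : MF.erB ((MF.dia (MF.var m)).subst σ) = MF.bot := by simp [MF.subst, MF.erB]
      rw [this]
      exact Tm.bot (hΨ.2.1.mp ⟨m, hθ⟩)
    · have : MF.erB ((MF.box (MF.var m)).subst σ) = MF.top := by simp [MF.subst, MF.erB]
      rw [this]
      exact Tm.top (hΨ.2.2.mp ⟨m, hθ⟩)
    · rw [MF.erB_subst_prop hp]
      exact Tm.app θ hθ hp _ (fun k _ => ih k)

/-- The decidable condition: every propositional member of `Φ` is propositionally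
equivalent to a term over `Ψ` (with the indicated constants). -/
def CondC (Φ Ψ : Set MF) (cT cB : Bool) : Prop :=
  ∀ α ∈ Φ, α.isProp → ∃ t, Tm Ψ cT cB t ∧ (α.iff t).isTautology

theorem exprLe_cond_A {Λ : Set MF} (hA : TypeA Λ) {Φ Ψ : Set MF} (hΨ : IsSimpleSet Ψ)
    (h : exprLe Λ Φ Ψ) : CondC Φ Ψ false false := by
  intro α hα hp
  obtain ⟨ψ, hψfrag, hiff⟩ := h α (MLFrag.of_mem hα)
  refine ⟨MF.erA ψ, Tm_of_mlfrag_A hΨ hψfrag,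
    MF.isProp_iff hp (MF.erA_isProp ψ), fun v => ?_⟩
  have hv := hA _ hiff (fun n => v n = true)
  rw [MF.sat_refl_iff, MF.propEval_iff_eq] at hv
  rw [MF.propEval_iff_eq, MF.propEval_erA]
  exact hv

theorem exprLe_cond_B {Λ : Set MF} (hB : ∀ φ ∈ Λ, validOnIrreflPoint φ)
    {hd hb : Bool} {Φ Ψ : Set MF} (hΨ : IsMSimpleSet hd hb Ψ)
    (h : exprLe Λ Φ Ψ) : CondC Φ Ψ hb hd := by
  intro α hα hp
  obtain ⟨ψ, hψfrag, hiff⟩ := h α (MLFrag.of_mem hα)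
  refine ⟨MF.erB ψ, Tm_of_mlfrag_B hΨ hψfrag,
    MF.isProp_iff hp (MF.erB_isProp ψ), fun v => ?_⟩
  have hv := hB _ hiff (fun n => v n = true)
  rw [MF.sat_irrefl_iff, MF.erB_iff, MF.erB_prop_eq hp, MF.propEval_iff_eq] at hv
  rw [MF.propEval_iff_eq]
  exact hv

theorem Tm_realize {Λ : Set MF} (hΛ : NormalLogic Λ) {Ψ : Set MF} {cT cB : Bool}
    (hT : cT = true → ∃ χ, MLFrag Ψ χ ∧ χ ∈ Λ)
    (hB : cB = true → ∃ χ, MLFrag Ψ χ ∧ MF.neg χ ∈ Λ)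
    {t : MF} (ht : Tm Ψ cT cB t) :
    ∀ τ : ℕ → MF, (∀ n, MLFrag Ψ (τ n)) → ∃ ψ, MLFrag Ψ ψ ∧ ((t.subst τ).iff ψ) ∈ Λ := by
  induction ht with
  | var n => exact fun τ hτ => ⟨τ n, hτ n, hΛ.leq_refl _⟩
  | top hc =>
    intro τ hτ
    obtain ⟨χ, hχ, hχΛ⟩ := hT hc
    refine ⟨χ, hχ, hΛ.leq_of_thms ?_ hχΛ⟩
    refine hΛ.usubst MF.top τ (hΛ.taut _ ⟨⟨trivial, trivial⟩, fun v => ?_⟩)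
    simp only [MF.top, MF.propEval]
    cases v 0 <;> rfl
  | bot hc =>
    intro τ hτ
    obtain ⟨χ, hχ, hχΛ⟩ := hB hc
    refine ⟨χ, hχ, hΛ.leq_of_negthms ?_ hχΛ⟩
    have h2 := hΛ.usubst (MF.neg MF.bot) τ (hΛ.taut _ ⟨⟨trivial, trivial⟩, fun v => ?_⟩)
    · simpa [MF.subst] using h2
    · simp only [MF.bot, MF.propEval]
      cases v 0 <;> rfl
  | app θ hθ hp σ h ih =>
    intro τ hτ
    classical
    have hex : ∀ k ∈ θ.vars, ∃ ψ, MLFrag Ψ ψ ∧ (((σ k).subst τ).iff ψ) ∈ Λ :=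
      fun k hk => ih k hk τ hτ
    set ρ : ℕ → MF := fun k =>
      if hk : k ∈ θ.vars then (hex k hk).choose else MF.var 0 with hρ
    have hρfrag : ∀ n, MLFrag Ψ (ρ n) := by
      intro n
      by_cases hk : n ∈ θ.vars
      · simp only [hρ, dif_pos hk]; exact (hex n hk).choose_spec.1
      · simp only [hρ, dif_neg hk]; exact MLFrag.var 0
    refine ⟨θ.subst ρ, MLFrag.app θ hθ ρ hρfrag, ?_⟩
    rw [MF.subst_subst]
    refine hΛ.propCong hp (fun k hk => ?_)
    simp only [hρ, dif_pos hk]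
    exact (hex k hk).choose_spec.2

theorem MLFrag.boxIter_var {Ψ : Set MF} {m' : ℕ} (hm : MF.box (MF.var m') ∈ Ψ) (k : ℕ) :
    MLFrag Ψ (MF.boxIter k (MF.var 0)) := by
  induction k with
  | zero => exact MLFrag.var 0
  | succ k ih =>
    have := MLFrag.app (MF.box (MF.var m')) hm (fun _ => MF.boxIter k (MF.var 0))
      (fun _ => ih)
    simpa [MF.subst, MF.boxIter] using this

theorem MLFrag.diaIter_var {Ψ : Set MF} {m' : ℕ} (hm : MF.dia (MF.var m') ∈ Ψ) (k : ℕ) :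
    MLFrag Ψ (MF.diaIter k (MF.var 0)) := by
  induction k with
  | zero => exact MLFrag.var 0
  | succ k ih =>
    have := MLFrag.app (MF.dia (MF.var m')) hm (fun _ => MF.diaIter k (MF.var 0))
      (fun _ => ih)
    simpa [MF.subst, MF.diaIter] using this

theorem cond_to_exprLe {Λ : Set MF} (hΛ : NormalLogic Λ) {hd hb : Bool} {Φ Ψ : Set MF}
    (hΦ : IsMSimpleSet hd hb Φ) (hΨ : IsMSimpleSet hd hb Ψ) {cT cB : Bool}
    (hT : cT = true → ∃ χ, MLFrag Ψ χ ∧ χ ∈ Λ)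
    (hB : cB = true → ∃ χ, MLFrag Ψ χ ∧ MF.neg χ ∈ Λ)
    (hC : CondC Φ Ψ cT cB) : exprLe Λ Φ Ψ := by
  intro φ hφ
  induction hφ with
  | var n => exact ⟨MF.var n, MLFrag.var n, hΛ.leq_refl _⟩
  | app θ hθ σ hσ ih =>
    classical
    choose τ hτ1 hτ2 using ih
    rcases hΦ.1 θ hθ with ⟨m, rfl⟩ | ⟨m, rfl⟩ | hp
    · have hdt : hd = true := hΦ.2.1.mp ⟨m, hθ⟩
      obtain ⟨m', hm'⟩ := hΨ.2.1.mpr hdt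
      refine ⟨MF.dia (τ m), ?_, ?_⟩
      · have := MLFrag.app (MF.dia (MF.var m')) hm' (fun _ => τ m) (fun _ => hτ1 m)
        simpa [MF.subst] using this
      · simpa [MF.subst] using hΛ.leq_dia (hτ2 m)
    · have hbt : hb = true := hΦ.2.2.mp ⟨m, hθ⟩
      obtain ⟨m', hm'⟩ := hΨ.2.2.mpr hbt
      refine ⟨MF.box (τ m), ?_, ?_⟩
      · have := MLFrag.app (MF.box (MF.var m')) hm' (fun _ => τ m) (fun _ => hτ1 m)
        simpa [MF.subst] using this
      · simpa [MF.subst] using hΛ.leq_box (hτ2 m)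
    · obtain ⟨t, htm, htaut⟩ := hC θ hθ hp
      have h1 : ((θ.subst σ).iff (θ.subst τ)) ∈ Λ := hΛ.propCong hp (fun k _ => hτ2 k)
      have h2 : ((θ.subst τ).iff (t.subst τ)) ∈ Λ := by
        have := hΛ.usubst _ τ (hΛ.taut _ htaut)
        rwa [MF.subst_iff] at this
      obtain ⟨ψ, hψ1, hψ2⟩ := Tm_realize hΛ hT hB htm τ hτ1
      exact ⟨ψ, hψ1, hΛ.leq_trans h1 (hΛ.leq_trans h2 hψ2)⟩

theorem exprLe_iff_A {Λ : Set MF} (hΛ : NormalLogic Λ) (hA : TypeA Λ) {hd hb : Bool}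
    {Φ Ψ : Set MF} (hΦ : IsMSimpleSet hd hb Φ) (hΨ : IsMSimpleSet hd hb Ψ) :
    exprLe Λ Φ Ψ ↔ CondC Φ Ψ false false := by
  constructor
  · exact exprLe_cond_A hA hΨ.1
  · exact cond_to_exprLe hΛ hΦ hΨ (fun h => by simp at h) (fun h => by simp at h)

theorem exprLe_iff_B {Λ : Set MF} (hΛ : NormalLogic Λ) (hB : TypeB Λ) {hd hb : Bool}
    {Φ Ψ : Set MF} (hΦ : IsMSimpleSet hd hb Φ) (hΨ : IsMSimpleSet hd hb Ψ) :
    exprLe Λ Φ Ψ ↔ CondC Φ Ψ hb hd := by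
  obtain ⟨hval, n, hn1, hn⟩ := hB
  constructor
  · exact exprLe_cond_B hval hΨ
  · refine cond_to_exprLe hΛ hΦ hΨ (fun h => ?_) (fun h => ?_)
    · obtain ⟨m', hm'⟩ := hΨ.2.2.mpr h
      exact ⟨MF.boxIter n (MF.var 0), MLFrag.boxIter_var hm' n, hΛ.boxIter_of_bot hn _⟩
    · obtain ⟨m', hm'⟩ := hΨ.2.1.mpr h
      exact ⟨MF.diaIter n (MF.var 0), MLFrag.diaIter_var hm' n, hΛ.neg_diaIter_of_bot hn _⟩
/-! ### Tables and closure computation -/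

def bnat : List Bool → ℕ := fun l => l.foldr (fun b acc => (cond b 1 0) + 2 * acc) 0

theorem bnat_lt (l : List Bool) : bnat l < 2 ^ l.length := by
  induction l with
  | nil => simp [bnat]
  | cons b l ih =>
    simp only [bnat, List.foldr, List.length_cons] at *
    rw [pow_succ]
    cases b <;> simp <;> omega

theorem testBit_bnat (l : List Bool) (i : ℕ) (h : i < l.length) :
    (bnat l).testBit i = l.getD i false := by
  induction l generalizing i with
  | nil => simp at h
  | cons b l ih =>
    cases i with
    | zero =>
      simp only [bnat, List.foldr, Nat.testBit_zero, List.getD_cons_zero]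
      cases b <;> simp [Nat.add_mul_mod_self_left]
    | succ i =>
      rw [Nat.testBit_add_one]
      have h2 : (bnat (b::l)) / 2 = bnat l := by
        have : bnat (b::l) = (cond b 1 0) + 2 * bnat l := rfl
        rw [this]; cases b <;> simp <;> omega
      rw [h2, List.getD_cons_succ]
      exact ih i (by simpa using h)

theorem list_eq_map_testBit (l : List Bool) :
    l = (List.range l.length).map (fun i => (bnat l).testBit i) := by
  apply List.ext_getElem (by simp)
  intro i h1 h2
  simp only [List.getElem_map, List.getElem_range]
  rw [testBit_bnat l i h1, List.getD_eq_getElem l false h1]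

/-- Truth table of a formula at width `n`. -/
def tblN (n : ℕ) (φ : MF) : List Bool :=
  (List.range (2^n)).map (fun m => φ.propEval (fun i => m.testBit i))

def projT (n i : ℕ) : List Bool := (List.range (2^n)).map (fun m => m.testBit i)

def constT (n : ℕ) (b : Bool) : List Bool := (List.range (2^n)).map (fun _ => b)

def idxOf (m : ℕ) (gs : List (List Bool)) : ℕ := bnat (gs.map (fun g => g.getD m false))

def applyT (n : ℕ) (T : List Bool) (gs : List (List Bool)) : List Bool :=
  (List.range (2^n)).map (fun m => T.getD (idxOf m gs) false)

def tuples : ℕ → List (List Bool) → List (List (List Bool))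
  | 0, _ => [[]]
  | w+1, S => (tuples w S).flatMap (fun gs => S.map (fun x => x :: gs))

def stepT (n : ℕ) (infos : List (ℕ × List Bool)) (S : List (List Bool)) : List (List Bool) :=
  S ++ infos.flatMap (fun p => (tuples p.1 S).map (fun gs => applyT n p.2 gs))

def initT (n : ℕ) (cT cB : Bool) : List (List Bool) :=
  ((List.range n).map (fun i => projT n i) ++ (if cT then [constT n true] else [])) ++
    (if cB then [constT n false] else [])

def iterT (n : ℕ) (infos : List (ℕ × List Bool)) (cT cB : Bool) : ℕ → List (List Bool)
  | 0 => initT n cT cB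
  | k+1 => stepT n infos (iterT n infos cT cB k)

def memT (x : List Bool) (S : List (List Bool)) : Bool :=
  S.foldr (fun y acc => (decide (y = x)) || acc) false

def checkTbl (infos : List (ℕ × List Bool)) (cT cB : Bool) (n : ℕ) (tα : List Bool) : Bool :=
  memT tα (iterT n infos cT cB (2^(2^n)+1))

theorem memT_iff (x : List Bool) (S : List (List Bool)) : memT x S = true ↔ x ∈ S := by
  induction S with
  | nil => simp [memT]
  | cons y S ih =>
    simp only [memT, List.foldr] at *
    simp [ih]
    constructor
    · rintro (rfl | h); exacts [Or.inl rfl, Or.inr h]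
    · rintro (rfl | h); exacts [Or.inl rfl, Or.inr h]

theorem tuples_mem (w : ℕ) (S : List (List Bool)) (gs : List (List Bool)) :
    gs ∈ tuples w S ↔ gs.length = w ∧ ∀ x ∈ gs, x ∈ S := by
  induction w generalizing gs with
  | zero =>
    simp only [tuples, List.mem_singleton]
    constructor
    · rintro rfl; exact ⟨rfl, by simp⟩
    · intro h; exact List.length_eq_zero_iff.mp h.1
  | succ w ih =>
    simp only [tuples, List.mem_flatMap, List.mem_map]
    constructor
    · rintro ⟨gs', hgs', x, hx, rfl⟩
      obtain ⟨hlen, hall⟩ := (ih gs').mp hgs'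
      refine ⟨by simp [hlen], ?_⟩
      intro y hy
      rcases List.mem_cons.mp hy with rfl | hy
      · exact hx
      · exact hall y hy
    · rintro ⟨hlen, hall⟩
      cases gs with
      | nil => simp at hlen
      | cons x gs' =>
        refine ⟨gs', (ih gs').mpr ⟨by simpa using hlen, fun y hy => hall y (List.mem_cons_of_mem _ hy)⟩,
          x, hall x List.mem_cons_self, rfl⟩

namespace MF

/-- Width: one more than the maximal variable. -/
def wdt : MF → ℕ
  | .var n => n + 1
  | .neg φ => wdt φ
  | .and φ ψ => max (wdt φ) (wdt ψ)
  | .or φ ψ => max (wdt φ) (wdt ψ)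
  | .dia φ => wdt φ
  | .box φ => wdt φ

theorem wdt_pos (φ : MF) : 1 ≤ φ.wdt := by
  induction φ <;> simp [wdt] <;> omega

theorem vars_lt_wdt {φ : MF} {k : ℕ} (h : k ∈ φ.vars) : k < φ.wdt := by
  induction φ with
  | var n => rcases h with rfl; simp [wdt]
  | neg φ ih => exact ih h
  | and φ ψ ih1 ih2 =>
    rcases h with h | h
    · exact lt_of_lt_of_le (ih1 h) (le_max_left _ _)
    · exact lt_of_lt_of_le (ih2 h) (le_max_right _ _)
  | or φ ψ ih1 ih2 =>
    rcases h with h | h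
    · exact lt_of_lt_of_le (ih1 h) (le_max_left _ _)
    · exact lt_of_lt_of_le (ih2 h) (le_max_right _ _)
  | dia φ ih => exact ih h
  | box φ ih => exact ih h

/-- Boolean test for propositionality. -/
def isPropB : MF → Bool
  | .var _ => true
  | .neg φ => isPropB φ
  | .and φ ψ => isPropB φ && isPropB ψ
  | .or φ ψ => isPropB φ && isPropB ψ
  | .dia _ => false
  | .box _ => false

theorem isPropB_iff (φ : MF) : φ.isPropB = true ↔ φ.isProp := by
  induction φ <;> simp [isPropB, isProp, *]

/-- Canonical truth table (at the formula's own width). -/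
def tbl (φ : MF) : List Bool := tblN φ.wdt φ

end MF

theorem tblN_length (n : ℕ) (φ : MF) : (tblN n φ).length = 2^n := by simp [tblN]

theorem tblN_getD {n : ℕ} {m : ℕ} (hm : m < 2^n) (φ : MF) :
    (tblN n φ).getD m false = φ.propEval (fun i => m.testBit i) := by
  rw [tblN, List.getD_eq_getElem _ false (by simpa using hm)]
  simp

theorem idxOf_lt (m : ℕ) (gs : List (List Bool)) : idxOf m gs < 2 ^ gs.length := by
  have := bnat_lt (gs.map (fun g => g.getD m false))
  simpa [idxOf] using this

theorem testBit_idxOf (m : ℕ) (gs : List (List Bool)) {k : ℕ} (hk : k < gs.length) :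
    (idxOf m gs).testBit k = (gs.getD k []).getD m false := by
  rw [idxOf, testBit_bnat _ k (by simpa using hk)]
  rw [List.getD_eq_getElem _ false (by simpa using hk), List.getD_eq_getElem _ [] hk]
  simp

/-- The key compositionality lemma for tables. -/
theorem applyT_tbl (n : ℕ) (θ : MF) (σ : ℕ → MF) :
    applyT n θ.tbl ((List.range θ.wdt).map (fun k => tblN n (σ k))) = tblN n (θ.subst σ) := by
  apply List.ext_getElem (by simp [applyT, tblN])
  intro m h1 h2
  have hm : m < 2^n := by simpa [applyT] using h1
  set gs := (List.range θ.wdt).map (fun k => tblN n (σ k)) with hgs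
  have hlen : gs.length = θ.wdt := by simp [hgs]
  have hidx : idxOf m gs < 2 ^ θ.wdt := by rw [← hlen]; exact idxOf_lt m gs
  have lhs : (applyT n θ.tbl gs)[m] = θ.tbl.getD (idxOf m gs) false := by
    simp only [applyT]
    rw [List.getElem_map]
    congr 1
    simp
  rw [lhs]
  have h3 : θ.tbl.getD (idxOf m gs) false =
      θ.propEval (fun i => (idxOf m gs).testBit i) := tblN_getD hidx θ
  rw [h3]
  have h4 : (tblN n (θ.subst σ))[m] = (θ.subst σ).propEval (fun i => m.testBit i) := by
    simp [tblN]
  rw [h4, MF.propEval_subst]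
  apply MF.propEval_congr
  intro k hk
  have hkw : k < θ.wdt := MF.vars_lt_wdt hk
  rw [testBit_idxOf m gs (by omega)]
  have : gs.getD k [] = tblN n (σ k) := by
    rw [hgs, List.getD_eq_getElem _ [] (by simpa [hgs] using hkw)]
    simp
  rw [this, tblN_getD hm]
/-! ### Correctness of the closure computation -/

def infosOf (ΨL : List MF) : List (ℕ × List Bool) :=
  (ΨL.filter MF.isPropB).map (fun θ => (θ.wdt, θ.tbl))

theorem mem_infosOf {ΨL : List MF} {p : ℕ × List Bool} :
    p ∈ infosOf ΨL ↔ ∃ θ ∈ ΨL, θ.isProp ∧ p = (θ.wdt, θ.tbl) := by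
  simp only [infosOf, List.mem_map, List.mem_filter]
  constructor
  · rintro ⟨θ, ⟨h1, h2⟩, rfl⟩
    exact ⟨θ, h1, (MF.isPropB_iff θ).mp h2, rfl⟩
  · rintro ⟨θ, h1, h2, rfl⟩
    exact ⟨θ, ⟨h1, (MF.isPropB_iff θ).mpr h2⟩, rfl⟩

theorem tblN_var (n j : ℕ) : tblN n (MF.var j) = projT n j := rfl

theorem tblN_top (n : ℕ) : tblN n MF.top = constT n true := by
  apply List.map_congr_left
  intro m _
  simp only [MF.top, MF.propEval]
  cases (Nat.testBit m 0) <;> rfl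

theorem tblN_bot (n : ℕ) : tblN n MF.bot = constT n false := by
  apply List.map_congr_left
  intro m _
  simp only [MF.bot, MF.propEval]
  cases (Nat.testBit m 0) <;> rfl

theorem mem_initT {n : ℕ} {cT cB : Bool} {x : List Bool} :
    x ∈ initT n cT cB ↔ ((∃ i < n, x = projT n i) ∨ (cT = true ∧ x = constT n true) ∨
      (cB = true ∧ x = constT n false)) := by
  simp only [initT, List.mem_append, List.mem_map, List.mem_range]
  constructor
  · rintro ((⟨i, hi, rfl⟩ | h) | h)
    · exact Or.inl ⟨i, hi, rfl⟩
    · cases cT <;> simp_all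
    · cases cB <;> simp_all
  · rintro (⟨i, hi, rfl⟩ | ⟨hc, rfl⟩ | ⟨hc, rfl⟩)
    · exact Or.inl (Or.inl ⟨i, hi, rfl⟩)
    · subst hc; simp
    · subst hc; simp

theorem mem_stepT {n : ℕ} {infos : List (ℕ × List Bool)} {S : List (List Bool)}
    {x : List Bool} :
    x ∈ stepT n infos S ↔ x ∈ S ∨ ∃ p ∈ infos, ∃ gs : List (List Bool),
      (gs.length = p.1 ∧ ∀ y ∈ gs, y ∈ S) ∧ x = applyT n p.2 gs := by
  simp only [stepT, List.mem_append, List.mem_flatMap, List.mem_map]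
  constructor
  · rintro (h | ⟨p, hp, gs, hgs, rfl⟩)
    · exact Or.inl h
    · exact Or.inr ⟨p, hp, gs, (tuples_mem _ _ _).mp hgs, rfl⟩
  · rintro (h | ⟨p, hp, gs, hgs, rfl⟩)
    · exact Or.inl h
    · exact Or.inr ⟨p, hp, gs, (tuples_mem _ _ _).mpr hgs, rfl⟩

theorem iter_mono {n : ℕ} {infos : List (ℕ × List Bool)} {cT cB : Bool} {j k : ℕ}
    (h : j ≤ k) {x : List Bool} (hx : x ∈ iterT n infos cT cB j) :
    x ∈ iterT n infos cT cB k := by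
  induction h with
  | refl => exact hx
  | step h ih => exact mem_stepT.mpr (Or.inl ih)

theorem length_mem_iter {n : ℕ} {infos : List (ℕ × List Bool)} {cT cB : Bool} {k : ℕ}
    {x : List Bool} (hx : x ∈ iterT n infos cT cB k) : x.length = 2^n := by
  induction k with
  | zero =>
    rcases mem_initT.mp hx with ⟨i, _, rfl⟩ | ⟨_, rfl⟩ | ⟨_, rfl⟩ <;>
      simp [projT, constT]
  | succ k ih =>
    rcases mem_stepT.mp hx with h | ⟨p, _, gs, _, rfl⟩
    · exact ih h
    · simp [applyT]

theorem iter_sound (ΨL : List MF) (cT cB : Bool) {n : ℕ} (hn : 1 ≤ n) (k : ℕ) :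
    ∀ x ∈ iterT n (infosOf ΨL) cT cB k, ∃ t : MF, Tm {θ | θ ∈ ΨL} cT cB t ∧
      (∀ j ∈ t.vars, j < n) ∧ tblN n t = x := by
  induction k with
  | zero =>
    intro x hx
    rcases mem_initT.mp hx with ⟨i, hi, rfl⟩ | ⟨hc, rfl⟩ | ⟨hc, rfl⟩
    · exact ⟨MF.var i, Tm.var i, by rintro j rfl; exact hi, tblN_var n i⟩
    · exact ⟨MF.top, Tm.top hc, by rintro j (rfl | rfl) <;> omega, tblN_top n⟩
    · exact ⟨MF.bot, Tm.bot hc, by rintro j (rfl | rfl) <;> omega, tblN_bot n⟩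
  | succ k ih =>
    intro x hx
    rcases mem_stepT.mp hx with h | ⟨p, hp, gs, ⟨hlen, hall⟩, rfl⟩
    · exact ih x h
    · obtain ⟨θ, hθ, hθp, rfl⟩ := mem_infosOf.mp hp
      classical
      have hch : ∀ j, j < θ.wdt → ∃ t : MF, Tm {θ | θ ∈ ΨL} cT cB t ∧
          (∀ i ∈ t.vars, i < n) ∧ tblN n t = gs.getD j [] := by
        intro j hj
        refine ih (gs.getD j []) (hall _ ?_)
        rw [List.getD_eq_getElem _ [] (by omega)]
        exact List.getElem_mem _
      set σ : ℕ → MF := fun j => if h : j < θ.wdt then (hch j h).choose else MF.var 0 with hσ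
      have hgs : gs = (List.range θ.wdt).map (fun j => tblN n (σ j)) := by
        apply List.ext_getElem (by simp [hlen])
        intro j h1 h2
        have hj : j < θ.wdt := by omega
        simp only [List.getElem_map, List.getElem_range, hσ, dif_pos hj]
        have hs := (hch j hj).choose_spec.2.2
        rw [hs]
        exact (List.getD_eq_getElem _ [] h1).symm
      refine ⟨θ.subst σ, ?_, ?_, ?_⟩
      · refine Tm.app θ (show θ ∈ {θ | θ ∈ ΨL} from hθ) hθp σ (fun j hj => ?_)
        have hjw : j < θ.wdt := MF.vars_lt_wdt hj
        simp only [hσ, dif_pos hjw]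
        exact (hch j hjw).choose_spec.1
      · intro j hj
        obtain ⟨i, hiθ, hj2⟩ := MF.mem_vars_subst hj
        have hiw : i < θ.wdt := MF.vars_lt_wdt hiθ
        simp only [hσ, dif_pos hiw] at hj2
        exact (hch i hiw).choose_spec.2.1 j hj2
      · rw [← applyT_tbl n θ σ, hgs]

theorem vars_subst_of {θ : MF} {σ : ℕ → MF} {k j : ℕ} (hk : k ∈ θ.vars)
    (hj : j ∈ (σ k).vars) : j ∈ (θ.subst σ).vars := by
  induction θ with
  | var i => rcases hk with rfl; exact hj
  | neg θ ih => exact ih hk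
  | and θ₁ θ₂ ih1 ih2 =>
    rcases hk with hk | hk
    · exact Or.inl (ih1 hk)
    · exact Or.inr (ih2 hk)
  | or θ₁ θ₂ ih1 ih2 =>
    rcases hk with hk | hk
    · exact Or.inl (ih1 hk)
    · exact Or.inr (ih2 hk)
  | dia θ ih => exact ih hk
  | box θ ih => exact ih hk

theorem tblN_subst_congr {n : ℕ} {θ : MF} {σ σ' : ℕ → MF}
    (h : ∀ k ∈ θ.vars, σ k = σ' k) : tblN n (θ.subst σ) = tblN n (θ.subst σ') := by
  apply List.map_congr_left
  intro m _
  rw [MF.propEval_subst, MF.propEval_subst]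
  exact MF.propEval_congr (fun k hk => by rw [h k hk])

theorem iter_complete (ΨL : List MF) (cT cB : Bool) {n : ℕ} (hn : 1 ≤ n) {t : MF}
    (ht : Tm {θ | θ ∈ ΨL} cT cB t) (hv : ∀ j ∈ t.vars, j < n) :
    ∃ k, tblN n t ∈ iterT n (infosOf ΨL) cT cB k := by
  induction ht with
  | var j =>
    refine ⟨0, mem_initT.mpr (Or.inl ⟨j, ?_, tblN_var n j⟩)⟩
    exact hv j rfl
  | top hc => exact ⟨0, mem_initT.mpr (Or.inr (Or.inl ⟨hc, tblN_top n⟩))⟩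
  | bot hc => exact ⟨0, mem_initT.mpr (Or.inr (Or.inr ⟨hc, tblN_bot n⟩))⟩
  | app θ hθ hp σ h ih =>
    classical
    have hvk : ∀ k ∈ θ.vars, ∀ j ∈ (σ k).vars, j < n := by
      intro k hk j hj
      exact hv j (vars_subst_of hk hj)
    set σ' : ℕ → MF := fun k => if hk : k ∈ θ.vars then σ k else MF.var 0 with hσ'
    have hex : ∀ k, ∃ m, tblN n (σ' k) ∈ iterT n (infosOf ΨL) cT cB m := by
      intro k
      by_cases hk : k ∈ θ.vars
      · simp only [hσ', dif_pos hk]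
        exact ih k hk (hvk k hk)
      · simp only [hσ', dif_neg hk]
        exact ⟨0, mem_initT.mpr (Or.inl ⟨0, by omega, tblN_var n 0⟩)⟩
    set jf : ℕ → ℕ := fun k => (hex k).choose with hjf
    set K : ℕ := (Finset.range θ.wdt).sup jf with hK
    have hmem : ∀ k < θ.wdt, tblN n (σ' k) ∈ iterT n (infosOf ΨL) cT cB K := by
      intro k hk
      exact iter_mono (Finset.le_sup (Finset.mem_range.mpr hk)) (hex k).choose_spec
    refine ⟨K + 1, ?_⟩
    have heq : tblN n (θ.subst σ) = tblN n (θ.subst σ') :=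
      tblN_subst_congr (fun k hk => by simp only [hσ']; rw [dif_pos hk])
    rw [heq]
    refine mem_stepT.mpr (Or.inr ⟨(θ.wdt, θ.tbl),
      mem_infosOf.mpr ⟨θ, hθ, hp, rfl⟩,
      (List.range θ.wdt).map (fun k => tblN n (σ' k)), ⟨by simp, ?_⟩, ?_⟩)
    · intro y hy
      obtain ⟨k, hk, rfl⟩ := List.mem_map.mp hy
      exact hmem k (List.mem_range.mp hk)
    · rw [applyT_tbl]

theorem stepT_ext {n : ℕ} {infos : List (ℕ × List Bool)} {S S' : List (List Bool)}
    (h : ∀ y, y ∈ S ↔ y ∈ S') (x : List Bool) :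
    x ∈ stepT n infos S ↔ x ∈ stepT n infos S' := by
  rw [mem_stepT, mem_stepT]
  constructor
  · rintro (hx | ⟨p, hp, gs, ⟨h1, h2⟩, rfl⟩)
    · exact Or.inl ((h x).mp hx)
    · exact Or.inr ⟨p, hp, gs, ⟨h1, fun y hy => (h y).mp (h2 y hy)⟩, rfl⟩
  · rintro (hx | ⟨p, hp, gs, ⟨h1, h2⟩, rfl⟩)
    · exact Or.inl ((h x).mpr hx)
    · exact Or.inr ⟨p, hp, gs, ⟨h1, fun y hy => (h y).mpr (h2 y hy)⟩, rfl⟩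

theorem iter_stable {n : ℕ} {infos : List (ℕ × List Bool)} {cT cB : Bool} {k : ℕ}
    (h : ∀ y, y ∈ iterT n infos cT cB (k+1) ↔ y ∈ iterT n infos cT cB k) (j : ℕ) :
    ∀ y, y ∈ iterT n infos cT cB (k+j) ↔ y ∈ iterT n infos cT cB k := by
  induction j with
  | zero => intro y; rfl
  | succ j ih =>
    intro y
    have : (k + (j+1)) = (k + j) + 1 := by omega
    rw [this]
    exact (stepT_ext ih y).trans (h y)

theorem exists_stable {n : ℕ} {infos : List (ℕ × List Bool)} {cT cB : Bool} :
    ∃ k ≤ 2^(2^n), ∀ y, y ∈ iterT n infos cT cB (k+1) ↔ y ∈ iterT n infos cT cB k := by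
  by_contra hcon
  push_neg at hcon
  have hgrow : ∀ k ≤ 2^(2^n), ∃ y, y ∈ iterT n infos cT cB (k+1) ∧
      y ∉ iterT n infos cT cB k := by
    intro k hk
    obtain ⟨y, hy⟩ := hcon k hk
    rcases hy with ⟨h1, h2⟩ | ⟨h1, h2⟩
    · exact ⟨y, h1, h2⟩
    · exact absurd (iter_mono (Nat.le_succ k) h2) h1
  have hcard : ∀ k, k ≤ 2^(2^n) + 1 → k ≤ ((iterT n infos cT cB k).toFinset).card := by
    intro k
    induction k with
    | zero => omega
    | succ k ih =>
      intro hk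
      have h1 : k ≤ 2^(2^n) := by omega
      obtain ⟨y, hy1, hy2⟩ := hgrow k h1
      have hsub : (iterT n infos cT cB k).toFinset ⊂
          (iterT n infos cT cB (k+1)).toFinset := by
        constructor
        · intro z hz
          simp only [List.mem_toFinset] at *
          exact iter_mono (Nat.le_succ k) hz
        · intro hsub2
          exact hy2 (by simpa using hsub2 (by simpa using hy1))
      have := Finset.card_lt_card hsub
      have := ih (by omega)
      omega
  -- upper bound on the card
  have hbound : ((iterT n infos cT cB (2^(2^n)+1)).toFinset).card ≤ 2^(2^n) := by
    have hsub : (iterT n infos cT cB (2^(2^n)+1)).toFinset ⊆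
        (Finset.range (2^(2^n))).image
          (fun m => (List.range (2^n)).map (fun i => Nat.testBit m i)) := by
      intro x hx
      simp only [List.mem_toFinset] at hx
      have hlen := length_mem_iter hx
      simp only [Finset.mem_image, Finset.mem_range]
      refine ⟨bnat x, ?_, ?_⟩
      · have := bnat_lt x
        rwa [hlen] at this
      · rw [← hlen]
        exact (list_eq_map_testBit x).symm
    calc ((iterT n infos cT cB (2^(2^n)+1)).toFinset).card
        ≤ _ := Finset.card_le_card hsub
      _ ≤ (Finset.range (2^(2^n))).card := Finset.card_image_le
      _ = 2^(2^n) := Finset.card_range _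
  have := hcard (2^(2^n)+1) (le_refl _)
  omega

theorem mem_iter_final {n : ℕ} {infos : List (ℕ × List Bool)} {cT cB : Bool}
    {x : List Bool} :
    (∃ k, x ∈ iterT n infos cT cB k) ↔ x ∈ iterT n infos cT cB (2^(2^n)+1) := by
  constructor
  · rintro ⟨k, hk⟩
    obtain ⟨k0, hk0, hstab⟩ := exists_stable (n := n) (infos := infos) (cT := cT) (cB := cB)
    by_cases h : k ≤ 2^(2^n)+1
    · exact iter_mono h hk
    · have h2 : k = k0 + (k - k0) := by omega
      rw [h2] at hk
      have := (iter_stable hstab (k - k0) x).mp hk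
      exact iter_mono (by omega) this
  · exact fun h => ⟨_, h⟩
/-! ### The table check decides `CondC` -/

theorem Tm_rename {Ψ : Set MF} {cT cB : Bool} {t : MF} (h : Tm Ψ cT cB t)
    (r : ℕ → ℕ) (hr : r 0 = 0) : Tm Ψ cT cB (t.subst (fun k => MF.var (r k))) := by
  induction h with
  | var k => exact Tm.var (r k)
  | top hc =>
    have he : MF.top.subst (fun k => MF.var (r k)) = MF.top := by
      simp [MF.top, MF.subst, hr]
    rw [he]; exact Tm.top hc
  | bot hc =>
    have he : MF.bot.subst (fun k => MF.var (r k)) = MF.bot := by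
      simp [MF.bot, MF.subst, hr]
    rw [he]; exact Tm.bot hc
  | app θ hθ hp σ hσ ih =>
    rw [MF.subst_subst]
    exact Tm.app θ hθ hp _ ih

theorem testBit_bnat_range (n : ℕ) (v : ℕ → Bool) {i : ℕ} (hi : i < n) :
    (bnat ((List.range n).map v)).testBit i = v i := by
  rw [testBit_bnat _ i (by simpa using hi),
    List.getD_eq_getElem _ false (by simpa using hi)]
  simp

theorem propEval_eq_of_tblN {n : ℕ} {α β : MF} (hα : ∀ j ∈ α.vars, j < n)
    (hβ : ∀ j ∈ β.vars, j < n) (h : tblN n α = tblN n β) (v : ℕ → Bool) :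
    α.propEval v = β.propEval v := by
  set m : ℕ := bnat ((List.range n).map v) with hm
  have hmlt : m < 2^n := by
    have := bnat_lt ((List.range n).map v)
    simpa [hm] using this
  have h1 : α.propEval v = α.propEval (fun i => m.testBit i) :=
    MF.propEval_congr (fun k hk => (testBit_bnat_range n v (hα k hk)).symm)
  have h2 : β.propEval v = β.propEval (fun i => m.testBit i) :=
    MF.propEval_congr (fun k hk => (testBit_bnat_range n v (hβ k hk)).symm)
  rw [h1, h2, ← tblN_getD hmlt, ← tblN_getD hmlt, h]

theorem checkTbl_iff (ΨL : List MF) (cT cB : Bool) {α : MF} (hp : α.isProp) :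
    checkTbl (infosOf ΨL) cT cB α.wdt α.tbl = true ↔
      ∃ t, Tm {θ | θ ∈ ΨL} cT cB t ∧ (α.iff t).isTautology := by
  have hn : 1 ≤ α.wdt := MF.wdt_pos α
  rw [checkTbl, memT_iff]
  constructor
  · intro h
    obtain ⟨t, htm, hvars, htbl⟩ := iter_sound ΨL cT cB hn _ _ h
    refine ⟨t, htm, MF.isProp_iff hp htm.isProp, fun v => ?_⟩
    rw [MF.propEval_iff_eq]
    exact propEval_eq_of_tblN (fun j hj => MF.vars_lt_wdt hj) hvars htbl.symm v
  · rintro ⟨t, htm, ⟨hip, hiv⟩⟩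
    set n := α.wdt with hn2
    set rn : ℕ → ℕ := fun k => if k < n then k else 0 with hrn
    have ht' : Tm {θ | θ ∈ ΨL} cT cB (t.subst (fun k => MF.var (rn k))) :=
      Tm_rename htm rn (by simp [hrn, hn])
    have hvars : ∀ j ∈ (t.subst (fun k => MF.var (rn k))).vars, j < n := by
      intro j hj
      obtain ⟨k, _, hj2⟩ := MF.mem_vars_subst hj
      rcases hj2 with rfl
      simp only [hrn]
      split <;> omega
    have htbl : tblN n (t.subst (fun k => MF.var (rn k))) = tblN n α := by
      apply List.map_congr_left
      intro m _
      rw [MF.propEval_subst]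
      have hiv' := (MF.propEval_iff_eq (fun k => m.testBit (rn k)) α t).mp (hiv _)
      have : (t.propEval fun k => (MF.var (rn k)).propEval fun i => m.testBit i) =
          t.propEval (fun k => m.testBit (rn k)) := rfl
      rw [this, ← hiv']
      apply MF.propEval_congr
      intro k hk
      have : k < n := MF.vars_lt_wdt hk
      simp only [hrn, if_pos this]
    obtain ⟨k, hk⟩ := iter_complete ΨL cT cB hn ht' hvars
    rw [htbl] at hk
    exact mem_iter_final.mp ⟨k, hk⟩

/-- The full check on lists of formulas. -/
def mainCheckMF (cT cB : Bool) (LΦ LΨ : List MF) : Bool :=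
  LΦ.all (fun αf => !αf.isPropB || checkTbl (infosOf LΨ) cT cB αf.wdt αf.tbl)

theorem mainCheckMF_iff (cT cB : Bool) (LΦ LΨ : List MF) :
    mainCheckMF cT cB LΦ LΨ = true ↔ CondC {φ | φ ∈ LΦ} {θ | θ ∈ LΨ} cT cB := by
  rw [mainCheckMF, List.all_eq_true]
  constructor
  · intro h α hα hp
    have := h α hα
    rw [Bool.or_eq_true, Bool.not_eq_true'] at this
    rcases this with h1 | h1
    · rw [← Bool.not_eq_true, MF.isPropB_iff] at h1; · exact absurd hp h1
    · exact (checkTbl_iff LΨ cT cB hp).mp h1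
  · intro h α hα
    rw [Bool.or_eq_true, Bool.not_eq_true']
    by_cases hp : α.isProp
    · exact Or.inr ((checkTbl_iff LΨ cT cB hp).mpr (h α hα hp))
    · exact Or.inl (by rwa [← Bool.not_eq_true, MF.isPropB_iff])
/-! ### Code-level computation of formula information -/

abbrev InfoT := Bool × ℕ × List Bool

def infoDefault : InfoT := (true, 1, [false, false])

def infoStep (prev : List InfoT) (e : ℕ) : InfoT :=
  let t := e.unpair.1
  let p := e.unpair.2
  if t = 0 then (true, p+1, (List.range (2^(p+1))).map (fun m => m.testBit p))
  else if t = 1 then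
    ((prev.getD p infoDefault).1, (prev.getD p infoDefault).2.1,
      (prev.getD p infoDefault).2.2.map (fun b => !b))
  else if t = 2 then
    ((prev.getD p.unpair.1 infoDefault).1 && (prev.getD p.unpair.2 infoDefault).1,
      max (prev.getD p.unpair.1 infoDefault).2.1 (prev.getD p.unpair.2 infoDefault).2.1,
      (List.range (2^(max (prev.getD p.unpair.1 infoDefault).2.1
          (prev.getD p.unpair.2 infoDefault).2.1))).map
        (fun m => ((prev.getD p.unpair.1 infoDefault).2.2.getD
            (m % 2^(prev.getD p.unpair.1 infoDefault).2.1) false) &&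
          ((prev.getD p.unpair.2 infoDefault).2.2.getD
            (m % 2^(prev.getD p.unpair.2 infoDefault).2.1) false)))
  else if t = 3 then
    ((prev.getD p.unpair.1 infoDefault).1 && (prev.getD p.unpair.2 infoDefault).1,
      max (prev.getD p.unpair.1 infoDefault).2.1 (prev.getD p.unpair.2 infoDefault).2.1,
      (List.range (2^(max (prev.getD p.unpair.1 infoDefault).2.1
          (prev.getD p.unpair.2 infoDefault).2.1))).map
        (fun m => ((prev.getD p.unpair.1 infoDefault).2.2.getD
            (m % 2^(prev.getD p.unpair.1 infoDefault).2.1) false) ||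
          ((prev.getD p.unpair.2 infoDefault).2.2.getD
            (m % 2^(prev.getD p.unpair.2 infoDefault).2.1) false)))
  else if t = 4 then
    (false, (prev.getD p infoDefault).2.1, (prev.getD p infoDefault).2.2)
  else if t = 5 then
    (false, (prev.getD p infoDefault).2.1, (prev.getD p infoDefault).2.2)
  else infoDefault

def infoList : ℕ → List InfoT
  | 0 => []
  | k+1 => infoList k ++ [infoStep (infoList k) k]

def infoC (e : ℕ) : InfoT := (infoList (e+1)).getD e infoDefault

theorem infoList_length (k : ℕ) : (infoList k).length = k := by
  induction k with
  | zero => rfl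
  | succ k ih => simp [infoList, ih]

theorem infoList_getElem {j k : ℕ} (h : j < k) (hh : j < (infoList k).length) :
    (infoList k)[j] = infoStep (infoList j) j := by
  induction k with
  | zero => omega
  | succ k ih =>
    show ((infoList k) ++ [infoStep (infoList k) k])[j]'(by simpa [infoList] using hh) = _
    rw [List.getElem_append]
    split
    · exact ih (by rw [infoList_length] at *; omega) _
    · have hj : j = k := by rw [infoList_length] at *; omega
      subst hj
      simp

theorem infoC_eq (e : ℕ) : infoC e = infoStep (infoList e) e := by
  rw [infoC, List.getD_eq_getElem _ _ (by rw [infoList_length]; omega)]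
  exact infoList_getElem (Nat.lt_succ_self e) _

theorem infoList_getD_lt {j k : ℕ} (h : j < k) :
    (infoList k).getD j infoDefault = infoC j := by
  rw [List.getD_eq_getElem _ _ (by rw [infoList_length]; omega),
    infoList_getElem h, infoC_eq]

theorem lt_pair {t p : ℕ} (ht : 1 ≤ t) : p < Nat.pair t p :=
  lt_of_le_of_lt (Nat.right_le_pair 0 p) (Nat.pair_lt_pair_left p ht)

theorem infoStep_var (prev : List InfoT) (c : ℕ) :
    infoStep prev (Nat.pair 0 c) =
      (true, c+1, (List.range (2^(c+1))).map (fun m => m.testBit c)) := by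
  unfold infoStep; rw [Nat.unpair_pair]; rfl

theorem infoStep_neg (prev : List InfoT) (c : ℕ) :
    infoStep prev (Nat.pair 1 c) =
      ((prev.getD c infoDefault).1, (prev.getD c infoDefault).2.1,
        (prev.getD c infoDefault).2.2.map (fun b => !b)) := by
  unfold infoStep; rw [Nat.unpair_pair]; rfl

theorem infoStep_and (prev : List InfoT) (c1 c2 : ℕ) :
    infoStep prev (Nat.pair 2 (Nat.pair c1 c2)) =
      ((prev.getD c1 infoDefault).1 && (prev.getD c2 infoDefault).1,
        max (prev.getD c1 infoDefault).2.1 (prev.getD c2 infoDefault).2.1,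
        (List.range (2^(max (prev.getD c1 infoDefault).2.1
            (prev.getD c2 infoDefault).2.1))).map
          (fun m => ((prev.getD c1 infoDefault).2.2.getD
              (m % 2^(prev.getD c1 infoDefault).2.1) false) &&
            ((prev.getD c2 infoDefault).2.2.getD
              (m % 2^(prev.getD c2 infoDefault).2.1) false))) := by
  simp [infoStep, Nat.unpair_pair]

theorem infoStep_or (prev : List InfoT) (c1 c2 : ℕ) :
    infoStep prev (Nat.pair 3 (Nat.pair c1 c2)) =
      ((prev.getD c1 infoDefault).1 && (prev.getD c2 infoDefault).1,
        max (prev.getD c1 infoDefault).2.1 (prev.getD c2 infoDefault).2.1,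
        (List.range (2^(max (prev.getD c1 infoDefault).2.1
            (prev.getD c2 infoDefault).2.1))).map
          (fun m => ((prev.getD c1 infoDefault).2.2.getD
              (m % 2^(prev.getD c1 infoDefault).2.1) false) ||
            ((prev.getD c2 infoDefault).2.2.getD
              (m % 2^(prev.getD c2 infoDefault).2.1) false))) := by
  simp [infoStep, Nat.unpair_pair]

theorem infoStep_dia (prev : List InfoT) (c : ℕ) :
    infoStep prev (Nat.pair 4 c) =
      (false, (prev.getD c infoDefault).2.1, (prev.getD c infoDefault).2.2) := by
  unfold infoStep; rw [Nat.unpair_pair]; rfl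

theorem infoStep_box (prev : List InfoT) (c : ℕ) :
    infoStep prev (Nat.pair 5 c) =
      (false, (prev.getD c infoDefault).2.1, (prev.getD c infoDefault).2.2) := by
  unfold infoStep; rw [Nat.unpair_pair]; rfl

theorem tblN_neg (n : ℕ) (φ : MF) :
    tblN n (MF.neg φ) = (tblN n φ).map (fun b => !b) := by
  simp only [tblN, List.map_map]
  apply List.map_congr_left
  exact fun a _ => rfl

theorem tblN_mod_getD {w : ℕ} {φ : MF} (hw : ∀ j ∈ φ.vars, j < w) {m : ℕ} :
    (tblN w φ).getD (m % 2^w) false = φ.propEval (fun i => m.testBit i) := by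
  have h1 : m % 2^w < 2^w := Nat.mod_lt _ (Nat.pow_pos (by omega))
  rw [tblN_getD h1]
  apply MF.propEval_congr
  intro k hk
  rw [Nat.testBit_mod_two_pow]
  simp [hw k hk]

theorem infoC_encode (φ : MF) : infoC φ.encodeMF = (φ.isPropB, φ.wdt, φ.tbl) := by
  induction φ with
  | var n =>
    rw [infoC_eq, MF.encodeMF, infoStep_var]
    rfl
  | neg φ ih =>
    rw [infoC_eq, MF.encodeMF, infoStep_neg,
      infoList_getD_lt (lt_pair (by omega)), ih]
    simp only [Prod.mk.injEq]
    refine ⟨rfl, rfl, ?_⟩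
    simp only [MF.tbl]
    exact (tblN_neg _ _).symm
  | and φ ψ ih1 ih2 =>
    rw [infoC_eq, MF.encodeMF, infoStep_and,
      infoList_getD_lt (lt_of_le_of_lt (Nat.left_le_pair _ _) (lt_pair (by omega))),
      infoList_getD_lt (lt_of_le_of_lt (Nat.right_le_pair _ _) (lt_pair (by omega))),
      ih1, ih2]
    simp only [Prod.mk.injEq]
    refine ⟨rfl, rfl, ?_⟩
    simp only [MF.tbl]
    apply List.map_congr_left
    intro m _
    rw [tblN_mod_getD (fun j hj => MF.vars_lt_wdt hj),
      tblN_mod_getD (fun j hj => MF.vars_lt_wdt hj)]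
    rfl
  | or φ ψ ih1 ih2 =>
    rw [infoC_eq, MF.encodeMF, infoStep_or,
      infoList_getD_lt (lt_of_le_of_lt (Nat.left_le_pair _ _) (lt_pair (by omega))),
      infoList_getD_lt (lt_of_le_of_lt (Nat.right_le_pair _ _) (lt_pair (by omega))),
      ih1, ih2]
    simp only [Prod.mk.injEq]
    refine ⟨rfl, rfl, ?_⟩
    simp only [MF.tbl]
    apply List.map_congr_left
    intro m _
    rw [tblN_mod_getD (fun j hj => MF.vars_lt_wdt hj),
      tblN_mod_getD (fun j hj => MF.vars_lt_wdt hj)]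
    rfl
  | dia φ ih =>
    rw [infoC_eq, MF.encodeMF, infoStep_dia,
      infoList_getD_lt (lt_pair (by omega)), ih]
    rfl
  | box φ ih =>
    rw [infoC_eq, MF.encodeMF, infoStep_box,
      infoList_getD_lt (lt_pair (by omega)), ih]
    rfl
/-! ### Top-level checker on codes -/

def checkCodes (cT cB : Bool) (a b : List ℕ) : Bool :=
  (a.map infoC).all (fun q => !q.1 ||
    checkTbl (((b.map infoC).filter (fun q => q.1)).map (fun q => q.2)) cT cB q.2.1 q.2.2)

theorem infos_of_codes (LΨ : List MF) :
    (((LΨ.map MF.encodeMF).map infoC).filter (fun q => q.1)).map (fun q => q.2) =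
      infosOf LΨ := by
  rw [List.map_map]
  have h1 : LΨ.map (infoC ∘ MF.encodeMF) =
      LΨ.map (fun θ => ((θ.isPropB, θ.wdt, θ.tbl) : InfoT)) :=
    List.map_congr_left (fun θ _ => infoC_encode θ)
  rw [h1, List.filter_map, List.map_map]
  rfl

theorem all_map' {α β : Type*} (l : List α) (f : α → β) (p : β → Bool) :
    (l.map f).all p = l.all (fun x => p (f x)) := by
  induction l <;> simp [*]

theorem checkCodes_eq (cT cB : Bool) (LΦ LΨ : List MF) :
    checkCodes cT cB (LΦ.map MF.encodeMF) (LΨ.map MF.encodeMF) =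
      mainCheckMF cT cB LΦ LΨ := by
  rw [checkCodes, infos_of_codes, List.map_map]
  have h1 : LΦ.map (infoC ∘ MF.encodeMF) =
      LΦ.map (fun θ => ((θ.isPropB, θ.wdt, θ.tbl) : InfoT)) :=
    List.map_congr_left (fun θ _ => infoC_encode θ)
  rw [h1, all_map']
  rfl

def fFinal (cT cB : Bool) : ℕ → Bool := fun x =>
  match Encodable.decode (α := List ℕ) x.unpair.1,
    Encodable.decode (α := List ℕ) x.unpair.2 with
  | some a, some b => checkCodes cT cB a b
  | _, _ => false

theorem fFinal_eval (cT cB : Bool) (LΦ LΨ : List MF) :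
    fFinal cT cB (Nat.pair (Encodable.encode (LΦ.map MF.encodeMF))
        (Encodable.encode (LΨ.map MF.encodeMF))) =
      mainCheckMF cT cB LΦ LΨ := by
  rw [fFinal]
  simp only [Nat.unpair_pair, Encodable.encodek]
  exact checkCodes_eq cT cB LΦ LΨ
/-! ### Computability of the checker -/

section PrimrecProofs

open Primrec

theorem primrec_pow : Primrec₂ ((· ^ ·) : ℕ → ℕ → ℕ) :=
  Primrec₂.unpaired'.mp Nat.Primrec.pow

theorem primrec_pow2 : Primrec (fun k : ℕ => 2^k) :=
  primrec_pow.comp (const 2) Primrec.id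

theorem primrec_testBit : Primrec₂ Nat.testBit := by
  have h : PrimrecPred (fun p : ℕ × ℕ => p.1 / 2^p.2 % 2 = 1) :=
    PrimrecRel.comp Primrec.eq
      (nat_mod.comp (nat_div.comp fst (primrec_pow.comp (const 2) snd)) (const 2))
      (const 1)
  have h' : Primrec fun p : ℕ × ℕ => decide (p.1 / 2^p.2 % 2 = 1) := h.decide
  exact h'.of_eq (fun p => (Nat.testBit_eq_decide_div_mod_eq).symm)

theorem primrec_bnat : Primrec bnat := by
  have h₂ : Primrec₂ fun (_ : List Bool) (p : Bool × ℕ) => (cond p.1 1 0) + 2 * p.2 :=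
    nat_add.comp (Primrec.cond (fst.comp snd) (const 1) (const 0))
      (nat_double.comp (snd.comp snd))
  have h := Primrec.list_foldr Primrec.id (const 0) h₂
  exact h.of_eq (fun l => rfl)

theorem primrec_idxOf : Primrec₂ idxOf := by
  have hmap : Primrec fun p : ℕ × List (List Bool) =>
      p.2.map (fun g => g.getD p.1 false) :=
    Primrec.list_map snd ((list_getD false).comp snd (fst.comp fst))
  exact (primrec_bnat.comp hmap).of_eq (fun p => rfl)

theorem primrec_tuples : Primrec₂ (fun (S : List (List Bool)) (w : ℕ) => tuples w S) := by
  have hg : Primrec₂ fun (S : List (List Bool)) (p : ℕ × List (List (List Bool))) =>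
      p.2.flatMap (fun gs => S.map (fun x => x :: gs)) := by
    have hinner : Primrec₂ fun (q : (List (List Bool)) × (ℕ × List (List (List Bool))))
        (gs : List (List Bool)) => q.1.map (fun x => x :: gs) :=
      Primrec.list_map (fst.comp fst) (list_cons.comp snd (snd.comp fst))
    exact Primrec.list_flatMap (snd.comp snd) hinner
  have h := Primrec.nat_rec (f := fun (_ : List (List Bool)) => ([[]] : List (List (List Bool))))
    (const _) hg
  refine h.of_eq (fun S w => ?_)
  induction w with
  | zero => rfl
  | succ w ih => simp only [tuples, ← ih]

theorem primrec_memT : Primrec₂ memT := by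
  have hcond : PrimrecPred fun (q : (List Bool × List (List Bool)) × List Bool × Bool) =>
      q.2.1 = q.1.1 :=
    PrimrecRel.comp Primrec.eq (fst.comp snd) (fst.comp fst)
  have h₂ : Primrec₂ fun (p : List Bool × List (List Bool)) (q : List Bool × Bool) =>
      ((decide (q.1 = p.1)) || q.2) := by
    have := Primrec.cond (α := (List Bool × List (List Bool)) × List Bool × Bool)
      hcond.decide (const true) (snd.comp snd)
    exact this.of_eq (fun q => by cases hq : decide (q.2.1 = q.1.1) <;> simp [hq])
  have h := Primrec.list_foldr (α := List Bool × List (List Bool)) snd (const false) h₂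
  exact h.of_eq (fun p => rfl)

end PrimrecProofs
section PrimrecProofs2

open Primrec

private abbrev PLN := List InfoT × ℕ

theorem primrec_band : Primrec₂ (fun a b => a && b : Bool → Bool → Bool) := by
  have := Primrec.cond (Primrec.fst (α := Bool) (β := Bool)) Primrec.snd (Primrec.const false)
  exact this.of_eq (fun p => by cases p.1 <;> rfl)

theorem primrec_bor : Primrec₂ (fun a b => a || b : Bool → Bool → Bool) := by
  have := Primrec.cond (Primrec.fst (α := Bool) (β := Bool)) (Primrec.const true) Primrec.snd
  exact this.of_eq (fun p => by cases p.1 <;> rfl)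

theorem primrec_infoStep : Primrec₂ infoStep := by
  have htag : Primrec fun p : PLN => p.2.unpair.1 := fst.comp (unpair.comp snd)
  have hpay : Primrec fun p : PLN => p.2.unpair.2 := snd.comp (unpair.comp snd)
  have hq : Primrec fun p : PLN => p.1.getD p.2.unpair.2 infoDefault :=
    (list_getD infoDefault).comp fst hpay
  have hq1 : Primrec fun p : PLN => p.1.getD p.2.unpair.2.unpair.1 infoDefault :=
    (list_getD infoDefault).comp fst (fst.comp (unpair.comp hpay))
  have hq2 : Primrec fun p : PLN => p.1.getD p.2.unpair.2.unpair.2 infoDefault :=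
    (list_getD infoDefault).comp fst (snd.comp (unpair.comp hpay))
  -- widths of binary children
  have hw1 : Primrec fun p : PLN => (p.1.getD p.2.unpair.2.unpair.1 infoDefault).2.1 :=
    fst.comp (snd.comp hq1)
  have hw2 : Primrec fun p : PLN => (p.1.getD p.2.unpair.2.unpair.2 infoDefault).2.1 :=
    fst.comp (snd.comp hq2)
  have hW : Primrec fun p : PLN =>
      max (p.1.getD p.2.unpair.2.unpair.1 infoDefault).2.1
        (p.1.getD p.2.unpair.2.unpair.2 infoDefault).2.1 := nat_max.comp hw1 hw2
  -- var branch
  have hvar : Primrec fun p : PLN =>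
      ((true, p.2.unpair.2+1,
        (List.range (2^(p.2.unpair.2+1))).map (fun m => m.testBit p.2.unpair.2)) : InfoT) := by
    refine (const true).pair ((succ.comp hpay).pair ?_)
    exact Primrec.list_map (list_range.comp (primrec_pow2.comp (succ.comp hpay)))
      (primrec_testBit.comp snd (hpay.comp fst))
  -- neg branch
  have hneg : Primrec fun p : PLN =>
      (((p.1.getD p.2.unpair.2 infoDefault).1, (p.1.getD p.2.unpair.2 infoDefault).2.1,
        (p.1.getD p.2.unpair.2 infoDefault).2.2.map (fun b => !b)) : InfoT) := by
    refine (fst.comp hq).pair ((fst.comp (snd.comp hq)).pair ?_)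
    exact Primrec.list_map (snd.comp (snd.comp hq))
      ((Primrec.dom_bool (fun b => !b)).comp snd)
  -- binary tables
  have hbinand : Primrec fun p : PLN =>
      (List.range (2^(max (p.1.getD p.2.unpair.2.unpair.1 infoDefault).2.1
          (p.1.getD p.2.unpair.2.unpair.2 infoDefault).2.1))).map
        (fun m => ((p.1.getD p.2.unpair.2.unpair.1 infoDefault).2.2.getD
            (m % 2^(p.1.getD p.2.unpair.2.unpair.1 infoDefault).2.1) false) &&
          ((p.1.getD p.2.unpair.2.unpair.2 infoDefault).2.2.getD
            (m % 2^(p.1.getD p.2.unpair.2.unpair.2 infoDefault).2.1) false)) := by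
    refine Primrec.list_map (list_range.comp (primrec_pow2.comp hW)) ?_
    have he1 : Primrec fun q : PLN × ℕ =>
        (q.1.1.getD q.1.2.unpair.2.unpair.1 infoDefault).2.2.getD
          (q.2 % 2^(q.1.1.getD q.1.2.unpair.2.unpair.1 infoDefault).2.1) false :=
      (list_getD false).comp (snd.comp (snd.comp (hq1.comp fst)))
        (nat_mod.comp snd (primrec_pow2.comp (hw1.comp fst)))
    have he2 : Primrec fun q : PLN × ℕ =>
        (q.1.1.getD q.1.2.unpair.2.unpair.2 infoDefault).2.2.getD
          (q.2 % 2^(q.1.1.getD q.1.2.unpair.2.unpair.2 infoDefault).2.1) false :=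
      (list_getD false).comp (snd.comp (snd.comp (hq2.comp fst)))
        (nat_mod.comp snd (primrec_pow2.comp (hw2.comp fst)))
    exact primrec_band.comp he1 he2
  have hbinor : Primrec fun p : PLN =>
      (List.range (2^(max (p.1.getD p.2.unpair.2.unpair.1 infoDefault).2.1
          (p.1.getD p.2.unpair.2.unpair.2 infoDefault).2.1))).map
        (fun m => ((p.1.getD p.2.unpair.2.unpair.1 infoDefault).2.2.getD
            (m % 2^(p.1.getD p.2.unpair.2.unpair.1 infoDefault).2.1) false) ||
          ((p.1.getD p.2.unpair.2.unpair.2 infoDefault).2.2.getD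
            (m % 2^(p.1.getD p.2.unpair.2.unpair.2 infoDefault).2.1) false)) := by
    refine Primrec.list_map (list_range.comp (primrec_pow2.comp hW)) ?_
    have he1 : Primrec fun q : PLN × ℕ =>
        (q.1.1.getD q.1.2.unpair.2.unpair.1 infoDefault).2.2.getD
          (q.2 % 2^(q.1.1.getD q.1.2.unpair.2.unpair.1 infoDefault).2.1) false :=
      (list_getD false).comp (snd.comp (snd.comp (hq1.comp fst)))
        (nat_mod.comp snd (primrec_pow2.comp (hw1.comp fst)))
    have he2 : Primrec fun q : PLN × ℕ =>
        (q.1.1.getD q.1.2.unpair.2.unpair.2 infoDefault).2.2.getD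
          (q.2 % 2^(q.1.1.getD q.1.2.unpair.2.unpair.2 infoDefault).2.1) false :=
      (list_getD false).comp (snd.comp (snd.comp (hq2.comp fst)))
        (nat_mod.comp snd (primrec_pow2.comp (hw2.comp fst)))
    exact primrec_bor.comp he1 he2
  have hb1 : Primrec fun p : PLN =>
      ((p.1.getD p.2.unpair.2.unpair.1 infoDefault).1 &&
        (p.1.getD p.2.unpair.2.unpair.2 infoDefault).1) :=
    primrec_band.comp (fst.comp hq1) (fst.comp hq2)
  have hand : Primrec fun p : PLN =>
      (((p.1.getD p.2.unpair.2.unpair.1 infoDefault).1 &&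
          (p.1.getD p.2.unpair.2.unpair.2 infoDefault).1,
        max (p.1.getD p.2.unpair.2.unpair.1 infoDefault).2.1
          (p.1.getD p.2.unpair.2.unpair.2 infoDefault).2.1,
        (List.range (2^(max (p.1.getD p.2.unpair.2.unpair.1 infoDefault).2.1
            (p.1.getD p.2.unpair.2.unpair.2 infoDefault).2.1))).map
          (fun m => ((p.1.getD p.2.unpair.2.unpair.1 infoDefault).2.2.getD
              (m % 2^(p.1.getD p.2.unpair.2.unpair.1 infoDefault).2.1) false) &&
            ((p.1.getD p.2.unpair.2.unpair.2 infoDefault).2.2.getD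
              (m % 2^(p.1.getD p.2.unpair.2.unpair.2 infoDefault).2.1) false))) : InfoT) :=
    hb1.pair (hW.pair hbinand)
  have hor : Primrec fun p : PLN =>
      (((p.1.getD p.2.unpair.2.unpair.1 infoDefault).1 &&
          (p.1.getD p.2.unpair.2.unpair.2 infoDefault).1,
        max (p.1.getD p.2.unpair.2.unpair.1 infoDefault).2.1
          (p.1.getD p.2.unpair.2.unpair.2 infoDefault).2.1,
        (List.range (2^(max (p.1.getD p.2.unpair.2.unpair.1 infoDefault).2.1
            (p.1.getD p.2.unpair.2.unpair.2 infoDefault).2.1))).map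
          (fun m => ((p.1.getD p.2.unpair.2.unpair.1 infoDefault).2.2.getD
              (m % 2^(p.1.getD p.2.unpair.2.unpair.1 infoDefault).2.1) false) ||
            ((p.1.getD p.2.unpair.2.unpair.2 infoDefault).2.2.getD
              (m % 2^(p.1.getD p.2.unpair.2.unpair.2 infoDefault).2.1) false))) : InfoT) :=
    hb1.pair (hW.pair hbinor)
  have hmodal : Primrec fun p : PLN =>
      ((false, (p.1.getD p.2.unpair.2 infoDefault).2.1,
        (p.1.getD p.2.unpair.2 infoDefault).2.2) : InfoT) :=
    (const false).pair ((fst.comp (snd.comp hq)).pair (snd.comp (snd.comp hq)))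
  have hcond : ∀ k : ℕ, PrimrecPred fun p : PLN => p.2.unpair.1 = k :=
    fun k => PrimrecRel.comp Primrec.eq htag (const k)
  have hfull : Primrec fun p : PLN =>
      (if p.2.unpair.1 = 0 then
        ((true, p.2.unpair.2+1,
          (List.range (2^(p.2.unpair.2+1))).map (fun m => m.testBit p.2.unpair.2)) : InfoT)
      else if p.2.unpair.1 = 1 then
        ((p.1.getD p.2.unpair.2 infoDefault).1, (p.1.getD p.2.unpair.2 infoDefault).2.1,
          (p.1.getD p.2.unpair.2 infoDefault).2.2.map (fun b => !b))
      else if p.2.unpair.1 = 2 then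
        ((p.1.getD p.2.unpair.2.unpair.1 infoDefault).1 &&
            (p.1.getD p.2.unpair.2.unpair.2 infoDefault).1,
          max (p.1.getD p.2.unpair.2.unpair.1 infoDefault).2.1
            (p.1.getD p.2.unpair.2.unpair.2 infoDefault).2.1,
          (List.range (2^(max (p.1.getD p.2.unpair.2.unpair.1 infoDefault).2.1
              (p.1.getD p.2.unpair.2.unpair.2 infoDefault).2.1))).map
            (fun m => ((p.1.getD p.2.unpair.2.unpair.1 infoDefault).2.2.getD
                (m % 2^(p.1.getD p.2.unpair.2.unpair.1 infoDefault).2.1) false) &&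
              ((p.1.getD p.2.unpair.2.unpair.2 infoDefault).2.2.getD
                (m % 2^(p.1.getD p.2.unpair.2.unpair.2 infoDefault).2.1) false)))
      else if p.2.unpair.1 = 3 then
        ((p.1.getD p.2.unpair.2.unpair.1 infoDefault).1 &&
            (p.1.getD p.2.unpair.2.unpair.2 infoDefault).1,
          max (p.1.getD p.2.unpair.2.unpair.1 infoDefault).2.1
            (p.1.getD p.2.unpair.2.unpair.2 infoDefault).2.1,
          (List.range (2^(max (p.1.getD p.2.unpair.2.unpair.1 infoDefault).2.1
              (p.1.getD p.2.unpair.2.unpair.2 infoDefault).2.1))).map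
            (fun m => ((p.1.getD p.2.unpair.2.unpair.1 infoDefault).2.2.getD
                (m % 2^(p.1.getD p.2.unpair.2.unpair.1 infoDefault).2.1) false) ||
              ((p.1.getD p.2.unpair.2.unpair.2 infoDefault).2.2.getD
                (m % 2^(p.1.getD p.2.unpair.2.unpair.2 infoDefault).2.1) false)))
      else if p.2.unpair.1 = 4 then
        (false, (p.1.getD p.2.unpair.2 infoDefault).2.1,
          (p.1.getD p.2.unpair.2 infoDefault).2.2)
      else if p.2.unpair.1 = 5 then
        (false, (p.1.getD p.2.unpair.2 infoDefault).2.1,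
          (p.1.getD p.2.unpair.2 infoDefault).2.2)
      else infoDefault) :=
    Primrec.ite (hcond 0) hvar (Primrec.ite (hcond 1) hneg (Primrec.ite (hcond 2) hand
      (Primrec.ite (hcond 3) hor (Primrec.ite (hcond 4) hmodal
        (Primrec.ite (hcond 5) hmodal (const infoDefault))))))
  exact hfull.of_eq (fun p => rfl)

theorem primrec_infoList : Primrec infoList := by
  have hstep : Primrec₂ fun (k : ℕ) (acc : List InfoT) => acc ++ [infoStep acc k] :=
    Primrec.list_concat.comp snd (primrec_infoStep.comp snd fst)
  have h := Primrec.nat_rec₁ ([] : List InfoT) hstep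
  refine h.of_eq (fun k => ?_)
  induction k with
  | zero => rfl
  | succ k ih =>
    show (Nat.rec [] _ k : List InfoT) ++ _ = _
    rw [ih]
    rfl

theorem primrec_infoC : Primrec infoC :=
  (Primrec.list_getD infoDefault).comp (primrec_infoList.comp Primrec.succ) Primrec.id

end PrimrecProofs2
section PrimrecProofs3

open Primrec

theorem primrec_applyT :
    Primrec₂ (fun (p : ℕ × List Bool) (gs : List (List Bool)) => applyT p.1 p.2 gs) := by
  have hinner : Primrec₂ fun (γ : (ℕ × List Bool) × List (List Bool)) (m : ℕ) =>
      γ.1.2.getD (idxOf m γ.2) false :=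
    (list_getD false).comp (snd.comp (fst.comp fst)) (primrec_idxOf.comp snd (snd.comp fst))
  exact Primrec.list_map (list_range.comp (primrec_pow2.comp (fst.comp fst))) hinner

theorem primrec_stepT :
    Primrec₂ (fun (p : ℕ × List (ℕ × List Bool)) (S : List (List Bool)) =>
      stepT p.1 p.2 S) := by
  have hinner : Primrec₂ fun (γ : (ℕ × List (ℕ × List Bool)) × List (List Bool))
      (q : ℕ × List Bool) => (tuples q.1 γ.2).map (fun gs => applyT γ.1.1 q.2 gs) := by
    have h2 : Primrec₂ fun (δ : ((ℕ × List (ℕ × List Bool)) × List (List Bool)) ×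
        (ℕ × List Bool)) (gs : List (List Bool)) => applyT δ.1.1.1 δ.2.2 gs :=
      primrec_applyT.comp
        (Primrec.pair (fst.comp (fst.comp (fst.comp fst))) (snd.comp (snd.comp fst))) snd
    exact Primrec.list_map (primrec_tuples.comp (snd.comp fst) (fst.comp snd)) h2
  exact list_append.comp snd (Primrec.list_flatMap (snd.comp fst) hinner)

theorem primrec_projT : Primrec₂ projT := by
  exact Primrec.list_map (list_range.comp (primrec_pow2.comp fst))
    (primrec_testBit.comp snd (snd.comp fst))

theorem primrec_constT (b : Bool) : Primrec (fun n => constT n b) :=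
  Primrec.list_map (list_range.comp primrec_pow2) (const b)

theorem primrec_initT (cT cB : Bool) : Primrec (fun n => initT n cT cB) := by
  have h1 : Primrec fun n : ℕ => (List.range n).map (fun i => projT n i) :=
    Primrec.list_map list_range (primrec_projT.comp fst snd)
  have h2 : Primrec fun n : ℕ => (if cT then [constT n true] else [] : List (List Bool)) := by
    have : PrimrecPred (fun _ : ℕ => cT = true) := Primrec.primrecPred (Primrec.const (decide (cT = true)))
    exact Primrec.ite this (list_cons.comp (primrec_constT true) (const [])) (const [])
  have h3 : Primrec fun n : ℕ => (if cB then [constT n false] else [] : List (List Bool)) := by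
    have : PrimrecPred (fun _ : ℕ => cB = true) := Primrec.primrecPred (Primrec.const (decide (cB = true)))
    exact Primrec.ite this (list_cons.comp (primrec_constT false) (const [])) (const [])
  exact list_append.comp (list_append.comp h1 h2) h3

theorem iterT_eq_iterate (n : ℕ) (infos : List (ℕ × List Bool)) (cT cB : Bool) (k : ℕ) :
    iterT n infos cT cB k = (stepT n infos)^[k] (initT n cT cB) := by
  induction k with
  | zero => rfl
  | succ k ih => rw [Function.iterate_succ_apply', ← ih]; rfl

theorem primrec_checkTbl (cT cB : Bool) :
    Primrec₂ (fun (infos : List (ℕ × List Bool)) (q : ℕ × List Bool) =>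
      checkTbl infos cT cB q.1 q.2) := by
  have hiter : Primrec fun (γ : List (ℕ × List Bool) × (ℕ × List Bool)) =>
      iterT γ.2.1 γ.1 cT cB (2^(2^γ.2.1)+1) := by
    have hf : Primrec fun (γ : List (ℕ × List Bool) × (ℕ × List Bool)) => 2^(2^γ.2.1)+1 :=
      succ.comp (primrec_pow2.comp (primrec_pow2.comp (fst.comp snd)))
    have hg : Primrec fun (γ : List (ℕ × List Bool) × (ℕ × List Bool)) =>
        initT γ.2.1 cT cB := (primrec_initT cT cB).comp (fst.comp snd)
    have hh : Primrec₂ fun (γ : List (ℕ × List Bool) × (ℕ × List Bool))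
        (S : List (List Bool)) => stepT γ.2.1 γ.1 S :=
      primrec_stepT.comp (Primrec.pair (fst.comp (snd.comp fst)) (fst.comp fst)) snd
    have h := Primrec.nat_iterate hf hg hh
    exact h.of_eq (fun γ => (iterT_eq_iterate _ _ _ _ _).symm)
  exact primrec_memT.comp (snd.comp snd) hiter

theorem filter_eq_flatMap {α : Type*} (l : List α) (p : α → Bool) :
    l.filter p = l.flatMap (fun x => bif p x then [x] else []) := by
  induction l with
  | nil => rfl
  | cons x l ih =>
    rw [List.filter_cons, List.flatMap_cons, ← ih]
    cases p x <;> simp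

theorem all_eq_foldr {α : Type*} (l : List α) (p : α → Bool) :
    l.all p = l.foldr (fun x acc => p x && acc) true := by
  induction l with
  | nil => rfl
  | cons x l ih => simp [List.all_cons, ih]

theorem primrec_checkCodes (cT cB : Bool) : Primrec₂ (checkCodes cT cB) := by
  have hinfos : Primrec fun b : List ℕ =>
      ((b.map infoC).filter (fun q => q.1)).map (fun q => q.2) := by
    have hmapinfo : Primrec fun b : List ℕ => b.map infoC :=
      Primrec.list_map Primrec.id (primrec_infoC.comp snd)
    have hfilter : Primrec fun b : List ℕ => (b.map infoC).filter (fun q => q.1) := by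
      have hflat : Primrec fun b : List ℕ =>
          (b.map infoC).flatMap (fun q => bif q.1 then [q] else []) := by
        refine Primrec.list_flatMap hmapinfo ?_
        exact Primrec.cond (fst.comp snd) (list_cons.comp snd (const [])) (const [])
      exact hflat.of_eq (fun b => (filter_eq_flatMap _ _).symm)
    exact Primrec.list_map hfilter (snd.comp snd)
  have hmap1 : Primrec fun π : List ℕ × List ℕ => π.1.map infoC :=
    Primrec.list_map fst (primrec_infoC.comp snd)
  have hpred : Primrec₂ fun (π : List ℕ × List ℕ) (s : InfoT × Bool) =>
      (((!s.1.1) || checkTbl (((π.2.map infoC).filter (fun q => q.1)).map (fun q => q.2))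
        cT cB s.1.2.1 s.1.2.2) && s.2) := by
    have hnot : Primrec fun x : (List ℕ × List ℕ) × (InfoT × Bool) => !x.2.1.1 :=
      (Primrec.dom_bool (fun b => !b)).comp (fst.comp (fst.comp snd))
    have hchk : Primrec fun x : (List ℕ × List ℕ) × (InfoT × Bool) =>
        checkTbl (((x.1.2.map infoC).filter (fun q => q.1)).map (fun q => q.2))
          cT cB x.2.1.2.1 x.2.1.2.2 :=
      (primrec_checkTbl cT cB).comp (hinfos.comp (snd.comp fst)) (snd.comp (fst.comp snd))
    exact primrec_band.comp (primrec_bor.comp hnot hchk) (snd.comp snd)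
  have h := Primrec.list_foldr hmap1 (const true) hpred
  refine h.of_eq (fun π => ?_)
  rw [checkCodes, all_eq_foldr]

theorem primrec_fFinal (cT cB : Bool) : Primrec (fFinal cT cB) := by
  have hdec1 : Primrec fun x : ℕ => Encodable.decode (α := List ℕ) x.unpair.1 :=
    Primrec.decode.comp (fst.comp unpair)
  have hdec2 : Primrec fun p : ℕ × List ℕ =>
      Encodable.decode (α := List ℕ) p.1.unpair.2 :=
    Primrec.decode.comp (snd.comp (unpair.comp fst))
  have hinner : Primrec₂ fun (x : ℕ) (a : List ℕ) =>
      (Option.casesOn (Encodable.decode (α := List ℕ) x.unpair.2) false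
        (fun b => checkCodes cT cB a b) : Bool) := by
    refine Primrec.option_casesOn hdec2 (const false) ?_
    exact (primrec_checkCodes cT cB).comp (snd.comp fst) snd
  have h := Primrec.option_casesOn hdec1 (const false) hinner
  refine h.of_eq (fun x => ?_)
  simp [fFinal]

theorem fFinal_computable' (cT cB : Bool) : Computable (fFinal cT cB) :=
  (primrec_fFinal cT cB).to_comp

end PrimrecProofs3
theorem fFinal_computable (cT cB : Bool) : Computable (fFinal cT cB) :=
  fFinal_computable' cT cB

theorem stmt8 (Λ : Set MF) (hΛ : NormalLogic Λ) (hAB : TypeA Λ ∨ TypeB Λ)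
    (hd hb : Bool) :
    ∃ f : ℕ → Bool, Computable f ∧
      ∀ Φ Ψ : List MF, IsMSimpleSet hd hb {φ | φ ∈ Φ} → IsMSimpleSet hd hb {φ | φ ∈ Ψ} →
        (f (Nat.pair (Encodable.encode (Φ.map MF.encodeMF))
              (Encodable.encode (Ψ.map MF.encodeMF))) = true ↔
          exprLe Λ {φ | φ ∈ Φ} {φ | φ ∈ Ψ}) := by
  rcases hAB with hA | hB
  · refine ⟨fFinal false false, fFinal_computable false false, ?_⟩
    intro Φ Ψ hΦ hΨ
    rw [fFinal_eval, mainCheckMF_iff]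
    exact (exprLe_iff_A hΛ hA hΦ hΨ).symm
  · refine ⟨fFinal hb hd, fFinal_computable hb hd, ?_⟩
    intro Φ Ψ hΦ hΨ
    rw [fFinal_eval, mainCheckMF_iff]
    exact (exprLe_iff_B hΛ hB hΦ hΨ).symm
end

section
/- Every formula of PL_{¬,⊤} (the propositional fragment whose connectives are negation and the constant ⊤) has a unique characterization with respect to PL_{¬,⊤} consisting of exactly 2 labeled examples. -/
set_option maxHeartbeats 1000000

lemma canonNT (ψ : PLF ({bfNot, bfTop} : Set BFun)) :
    (∃ b : Bool, ∀ v, ψ.eval v = b) ∨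
    (∃ x, (∀ v, ψ.eval v = v x) ∨ (∀ v, ψ.eval v = !(v x))) := by
  induction ψ with
  | var n => exact Or.inr ⟨n, Or.inl fun v => rfl⟩
  | app f hf args ih =>
    rcases hf with rfl | rfl
    · haveI : NeZero bfNot.arity := ⟨bfNot.arity_pos.ne'⟩
      rcases ih 0 with ⟨b, hb⟩ | ⟨x, hx | hx⟩
      · exact Or.inl ⟨!b, fun v => by simp only [PLF.eval, bfNot]; exact congrArg (!·) (hb v)⟩
      · exact Or.inr ⟨x, Or.inr fun v => by simp only [PLF.eval, bfNot]; exact congrArg (!·) (hx v)⟩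
      · exact Or.inr ⟨x, Or.inl fun v => by simp only [PLF.eval, bfNot]; exact (congrArg (!·) (hx v)).trans (Bool.not_not _)⟩
    · exact Or.inl ⟨true, fun v => by simp [PLF.eval, bfTop]⟩

theorem stmt11 (φ : PLF {bfNot, bfTop}) :
    ∃ E : Set ((ℕ → Bool) × Bool), E.ncard = 2 ∧ uniqCharPL φ Set.univ E := by
  classical
  rcases canonNT φ with ⟨b, hb⟩ | ⟨x, hx | hx⟩
  · refine ⟨{(fun _ => false, b), (fun _ => true, b)}, ?_, ?_, ?_⟩
    · apply Set.ncard_pair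
      intro h
      have : (false : Bool) = true := congrFun (congrArg Prod.fst h) 0
      simp at this
    · rintro e (rfl | rfl) <;> simp [PLF.fits, hb]
    · rintro ψ - hψ
      have h1 := hψ _ (Or.inl rfl)
      have h2 := hψ _ (Or.inr rfl)
      simp only [PLF.fits] at h1 h2
      rcases canonNT ψ with ⟨b', hb'⟩ | ⟨y, hy | hy⟩
      · intro v; rw [hb, hb', ← h1, hb']
      · rw [hy] at h1 h2; rw [← h1] at h2; simp at h2
      · rw [hy] at h1 h2; rw [← h1] at h2; simp at h2
  · refine ⟨{(fun _ => false, false), (fun n => decide (n = x), true)}, ?_, ?_, ?_⟩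
    · apply Set.ncard_pair
      intro h
      exact absurd (congrArg Prod.snd h) (by simp)
    · rintro e (rfl | rfl) <;> simp [PLF.fits, hx]
    · rintro ψ - hψ
      have h1 := hψ _ (Or.inl rfl)
      have h2 := hψ _ (Or.inr rfl)
      simp only [PLF.fits] at h1 h2
      rcases canonNT ψ with ⟨b', hb'⟩ | ⟨y, hy | hy⟩
      · rw [hb'] at h1 h2; rw [h1] at h2; simp at h2
      · rw [hy] at h2; simp at h2
        intro v; rw [hx, hy, h2]
      · rw [hy] at h1; simp at h1
  · refine ⟨{(fun _ => false, true), (fun n => decide (n = x), false)}, ?_, ?_, ?_⟩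
    · apply Set.ncard_pair
      intro h
      exact absurd (congrArg Prod.snd h) (by simp)
    · rintro e (rfl | rfl) <;> simp [PLF.fits, hx]
    · rintro ψ - hψ
      have h1 := hψ _ (Or.inl rfl)
      have h2 := hψ _ (Or.inr rfl)
      simp only [PLF.fits] at h1 h2
      rcases canonNT ψ with ⟨b', hb'⟩ | ⟨y, hy | hy⟩
      · rw [hb'] at h1 h2; rw [h1] at h2; simp at h2
      · rw [hy] at h1; simp at h1
      · rw [hy] at h2; simp at h2
        intro v; rw [hx, hy, h2]
end

section
/- For every finite set PROP of propositional variables and every PL_{3XOR}[PROP]-formula φ, every set of labeled examples that uniquely characterizes φ with respect to PL_{3XOR}[PROP] contains at least |PROP| − 1 examples. -/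
set_option maxHeartbeats 1000000

/-! ### Auxiliary material for stmt12 -/

/-- Boolean to `ZMod 2`. -/
def bz (b : Bool) : ZMod 2 := if b then 1 else 0

lemma bz_inj : Function.Injective bz := by decide

lemma bz_xor (x y : Bool) : bz (x.xor y) = bz x + bz y := by
  revert x y; decide

lemma zmod2_add_self (x : ZMod 2) : x + x = 0 := by revert x; decide

lemma zmod2_ne_add (a b : ZMod 2) (h : a ≠ b) : a + b = 1 := by revert a b; decide

lemma zmod2_zero_or_one (a : ZMod 2) : a = 0 ∨ a = 1 := by revert a; decide

lemma zmod2_ne_self_add_one (a : ZMod 2) : a ≠ a + 1 := by revert a; decide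

/-- Every `3XOR`-formula computes a parity with odd total coefficient sum. -/
lemma xor_parity (φ : PLF {bf3Xor}) (F : Finset ℕ) (hF : φ.pvars ⊆ ↑F) :
    ∃ c : ℕ → ZMod 2, (∑ i ∈ F, c i) = 1 ∧
      ∀ v, bz (φ.eval v) = ∑ i ∈ F, c i * bz (v i) := by
  induction φ with
  | var n =>
    have hn : n ∈ F := by
      have := hF (show n ∈ (PLF.var n : PLF {bf3Xor}).pvars from rfl)
      simpa using this
    refine ⟨fun i => if i = n then 1 else 0, ?_, ?_⟩
    · rw [Finset.sum_ite_eq' F n (fun _ => (1 : ZMod 2))]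
      simp [hn]
    · intro v
      have : ∀ i ∈ F, (if i = n then (1:ZMod 2) else 0) * bz (v i)
          = (if i = n then bz (v i) else 0) := by
        intro i _; split <;> simp
      rw [Finset.sum_congr rfl this, Finset.sum_ite_eq' F n (fun i => bz (v i))]
      simp [hn, PLF.eval]
  | app f hf args ih =>
    have hf' : f = bf3Xor := hf
    subst hf'
    have hargs : ∀ i, (args i).pvars ⊆ ↑F := by
      intro i x hx
      exact hF (Set.mem_iUnion.mpr ⟨i, hx⟩)
    obtain ⟨c0, hc00, hc01⟩ := ih (0 : Fin 3) (hargs (0 : Fin 3))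
    obtain ⟨c1, hc10, hc11⟩ := ih (1 : Fin 3) (hargs (1 : Fin 3))
    obtain ⟨c2, hc20, hc21⟩ := ih (2 : Fin 3) (hargs (2 : Fin 3))
    refine ⟨fun i => c0 i + c1 i + c2 i, ?_, ?_⟩
    · rw [Finset.sum_add_distrib, Finset.sum_add_distrib, hc00, hc10, hc20]
      decide
    · intro v
      have : (PLF.app bf3Xor hf args).eval v =
          ((args (0:Fin 3)).eval v).xor (((args (1:Fin 3)).eval v).xor ((args (2:Fin 3)).eval v)) := rfl
      rw [this, bz_xor, bz_xor, hc01 v, hc11 v, hc21 v]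
      rw [← Finset.sum_add_distrib, ← Finset.sum_add_distrib]
      congr 1; funext i; ring

/-- Synthesis: any odd-cardinality parity is computed by a `3XOR`-formula. -/
lemma xor_synth_aux : ∀ (n : ℕ) (T : Finset ℕ), T.card = n → ((T.card : ZMod 2) = 1) →
    ∃ ψ : PLF {bf3Xor}, ψ.pvars ⊆ ↑T ∧ ∀ v, bz (ψ.eval v) = ∑ i ∈ T, bz (v i) := by
  intro n
  induction n using Nat.strong_induction_on with
  | _ n ih =>
    intro T hcard hodd
    match n, hcard with
    | 0, hcard =>
      rw [hcard] at hodd; exact absurd hodd (by decide)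
    | 1, hcard =>
      obtain ⟨a, rfl⟩ := Finset.card_eq_one.mp hcard
      refine ⟨PLF.var a, ?_, ?_⟩
      · intro x hx; simpa [PLF.pvars] using hx
      · intro v; simp [PLF.eval]
    | (m+2), hcard =>
      have h1 : 0 < T.card := by omega
      obtain ⟨a, ha⟩ := Finset.card_pos.mp h1
      have h2 : 0 < (T.erase a).card := by
        rw [Finset.card_erase_of_mem ha]; omega
      obtain ⟨b, hb⟩ := Finset.card_pos.mp h2
      set T' := (T.erase a).erase b with hT'
      have hcT' : T'.card = m := by
        rw [hT', Finset.card_erase_of_mem hb, Finset.card_erase_of_mem ha, hcard]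
        omega
      have hoddT' : ((T'.card : ℕ) : ZMod 2) = 1 := by
        rw [hcT']
        rw [hcard] at hodd
        push_cast at hodd ⊢
        have h20 : (2 : ZMod 2) = 0 := rfl
        linear_combination hodd - h20
      obtain ⟨ψ', hψ'v, hψ'e⟩ := ih m (by omega) T' hcT' hoddT'
      have hmem : bf3Xor ∈ ({bf3Xor} : Set BFun) := rfl
      let args' : Fin bf3Xor.arity → PLF {bf3Xor} := fun (i : Fin 3) =>
        if i = (0 : Fin 3) then PLF.var a else
          if i = (1 : Fin 3) then PLF.var b else ψ'
      refine ⟨PLF.app bf3Xor hmem args', ?_, ?_⟩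
      · intro x hx
        obtain ⟨i, hi⟩ := Set.mem_iUnion.mp hx
        have hbT : b ∈ T := Finset.mem_of_mem_erase hb
        have hsub : (T' : Set ℕ) ⊆ ↑T := by
          intro y hy
          exact Finset.mem_of_mem_erase (Finset.mem_of_mem_erase hy)
        fin_cases i
        · simp only [args', PLF.pvars] at hi
          rcases hi with rfl; exact ha
        · simp only [args', PLF.pvars] at hi
          rcases hi with rfl; exact hbT
        · simp only [args', PLF.pvars] at hi
          exact hsub (hψ'v hi)
      · intro v
        have heval : (PLF.app bf3Xor hmem args').eval v =
            (v a).xor ((v b).xor (ψ'.eval v)) := rfl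
        rw [heval, bz_xor, bz_xor, hψ'e v]
        rw [hT', Finset.add_sum_erase (T.erase a) (fun i => bz (v i)) hb,
          Finset.add_sum_erase T (fun i => bz (v i)) ha]

/-- Synthesis in coefficient form. -/
lemma xor_synth (F : Finset ℕ) (c : ℕ → ZMod 2) (h : ∑ i ∈ F, c i = 1) :
    ∃ ψ : PLF {bf3Xor}, ψ.pvars ⊆ ↑F ∧
      ∀ v, bz (ψ.eval v) = ∑ i ∈ F, c i * bz (v i) := by
  classical
  set T := F.filter (fun i => c i = 1) with hT
  have hmem1 : ∀ i ∈ T, c i = 1 := by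
    intro i hi; exact (Finset.mem_filter.mp hi).2
  have hcardT : ((T.card : ℕ) : ZMod 2) = 1 := by
    have h1 : ∑ i ∈ T, c i = ∑ i ∈ F, c i := by
      apply Finset.sum_filter_of_ne
      intro x _ hx
      rcases zmod2_zero_or_one (c x) with h0 | h0
      · exact absurd h0 hx
      · exact h0
    have h2 : ∑ i ∈ T, c i = (T.card : ZMod 2) := by
      rw [Finset.sum_congr rfl hmem1]
      simp
    rw [← h2, h1, h]
  obtain ⟨ψ, hψv, hψe⟩ := xor_synth_aux T.card T rfl hcardT
  refine ⟨ψ, ?_, ?_⟩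
  · intro x hx
    have := hψv hx
    have : x ∈ T := this
    exact Finset.mem_coe.mpr (Finset.mem_of_mem_filter x this)
  · intro v
    rw [hψe v]
    have h1 : ∑ i ∈ T, c i * bz (v i) = ∑ i ∈ F, c i * bz (v i) := by
      apply Finset.sum_filter_of_ne
      intro x _ hx
      rcases zmod2_zero_or_one (c x) with h0 | h0
      · rw [h0, zero_mul] at hx; exact absurd rfl hx
      · exact h0
    rw [← h1]
    apply Finset.sum_congr rfl
    intro i hi
    rw [hmem1 i hi, one_mul]

theorem stmt12 (PROP : Finset ℕ) (φ : PLF {bf3Xor}) (hφ : φ.pvars ⊆ ↑PROP)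
    (E : Set ((ℕ → Bool) × Bool)) (hfin : E.Finite)
    (hE : uniqCharPL φ {ψ : PLF {bf3Xor} | ψ.pvars ⊆ ↑PROP} E) :
    PROP.card - 1 ≤ E.ncard := by
  classical
  by_contra hlt
  push_neg at hlt
  -- notation
  set EF : Finset ((ℕ → Bool) × Bool) := hfin.toFinset with hEF
  have hEFcard : EF.card = E.ncard := (Set.ncard_eq_toFinset_card E hfin).symm
  have hn : EF.card + 1 < PROP.card := by omega
  -- the linear evaluation map
  set L : ((↥PROP) → ZMod 2) → ((↥EF → ZMod 2) × ZMod 2) :=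
    fun s => (fun e => ∑ i : ↥PROP, s i * bz (e.1.1 i.1), ∑ i : ↥PROP, s i) with hL
  have hcards : Fintype.card ((↥EF → ZMod 2) × ZMod 2)
      < Fintype.card ((↥PROP) → ZMod 2) := by
    rw [Fintype.card_prod, Fintype.card_fun, Fintype.card_fun, ZMod.card,
      Fintype.card_coe, Fintype.card_coe]
    calc 2 ^ EF.card * 2 = 2 ^ (EF.card + 1) := by ring
    _ < 2 ^ PROP.card := Nat.pow_lt_pow_right (by norm_num) hn
  obtain ⟨s1, s2, hne, heqL⟩ := Fintype.exists_ne_map_eq_of_card_lt L hcards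
  set s : ↥PROP → ZMod 2 := fun i => s1 i + s2 i with hs
  have hs0 : ∀ e : ↥EF, ∑ i : ↥PROP, s i * bz (e.1.1 i.1) = 0 := by
    intro e
    have h1 := congrFun (congrArg Prod.fst heqL) e
    simp only [hL] at h1
    calc ∑ i : ↥PROP, s i * bz (e.1.1 i.1)
        = ∑ i : ↥PROP, (s1 i * bz (e.1.1 i.1) + s2 i * bz (e.1.1 i.1)) := by
          apply Finset.sum_congr rfl; intro i _; rw [hs]; ring
      _ = (∑ i : ↥PROP, s1 i * bz (e.1.1 i.1)) + ∑ i : ↥PROP, s2 i * bz (e.1.1 i.1) :=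
          Finset.sum_add_distrib
      _ = 0 := by rw [h1]; exact zmod2_add_self _
  have hssum : ∑ i : ↥PROP, s i = 0 := by
    have h1 := congrArg Prod.snd heqL
    simp only [hL] at h1
    calc ∑ i : ↥PROP, s i = (∑ i : ↥PROP, s1 i) + ∑ i : ↥PROP, s2 i :=
        Finset.sum_add_distrib
      _ = 0 := by rw [h1]; exact zmod2_add_self _
  obtain ⟨j, hj⟩ := Function.ne_iff.mp hne
  have hsj : s j = 1 := zmod2_ne_add _ _ hj
  -- coefficients of φ
  obtain ⟨c, hc1, hc2⟩ := xor_parity φ PROP hφ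
  -- the perturbed coefficients
  set d : ℕ → ZMod 2 := fun i => if h : i ∈ PROP then s ⟨i, h⟩ else 0 with hd
  have hdsum : ∀ w : ℕ → ZMod 2, ∑ i ∈ PROP, d i * w i = ∑ i : ↥PROP, s i * w i.1 := by
    intro w
    rw [← Finset.sum_attach PROP (fun i => d i * w i), Finset.univ_eq_attach]
    apply Finset.sum_congr rfl
    intro i _
    simp only [hd, dif_pos i.2]
  set c' : ℕ → ZMod 2 := fun i => c i + d i with hc'
  have hc'sum : ∑ i ∈ PROP, c' i = 1 := by
    have : ∑ i ∈ PROP, d i = ∑ i : ↥PROP, s i := by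
      have := hdsum (fun _ => 1)
      simpa using this
    rw [hc', Finset.sum_add_distrib, hc1, this, hssum, add_zero]
  obtain ⟨ψ, hψv, hψe⟩ := xor_synth PROP c' hc'sum
  -- ψ fits every example in E
  have hfits : ∀ e ∈ E, ψ.fits e := by
    intro e he
    have heEF : e ∈ EF := (Set.Finite.mem_toFinset hfin).mpr he
    have hφfits : φ.eval e.1 = e.2 := hE.1 e he
    apply bz_inj
    rw [hψe e.1]
    have : ∑ i ∈ PROP, c' i * bz (e.1 i)
        = (∑ i ∈ PROP, c i * bz (e.1 i)) + ∑ i ∈ PROP, d i * bz (e.1 i) := by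
      rw [← Finset.sum_add_distrib]
      apply Finset.sum_congr rfl; intro i _; rw [hc']; ring
    rw [this, hdsum (fun i => bz (e.1 i)), hs0 ⟨e, heEF⟩, add_zero, ← hc2 e.1, hφfits]
  have hequiv : φ.equivPLF ψ := hE.2 ψ hψv hfits
  -- contradiction at the indicator assignment of j
  set v : ℕ → Bool := fun i => decide (i = j.1) with hv
  have hsingle : ∀ g : ℕ → ZMod 2, ∑ i ∈ PROP, g i * bz (v i) = g j.1 := by
    intro g
    rw [Finset.sum_eq_single_of_mem j.1 j.2]
    · simp [hv, bz]
    · intro i _ hne'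
      simp [hv, bz, hne']
  have h1 : bz (φ.eval v) = c j.1 := by rw [hc2 v, hsingle]
  have h2 : bz (ψ.eval v) = c j.1 + 1 := by
    rw [hψe v, hsingle, hc']
    simp only [hd, dif_pos j.2, hsj]
  have := hequiv v
  rw [this, h2] at h1
  exact zmod2_ne_self_add_one (c j.1) h1.symm
end

section
/- Let C1 = (C1, E1, λ1) and C2 = (C2, E2, λ2) be concept classes with C1 ≤_pc C2 via the reduction (f, h). If, for some concept c ∈ C1, every set of labeled examples that uniquely characterizes c within C1 has size at least n, then every set of labeled examples that uniquely characterizes f(c) within C2 also has size at least n. -/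
set_option maxHeartbeats 1000000

theorem stmt13 {C1 : Type*} {E1 : Type*} {C2 : Type*} {E2 : Type*}
    (l1 : C1 → Set E1) (l2 : C2 → Set E2) (r : PCRed l1 l2) (c : C1) (n : ℕ)
    (hc : ∀ S : Set (E1 × Bool), ccUniqChar l1 c S → S.Finite → n ≤ S.ncard) :
    ∀ S : Set (E2 × Bool), ccUniqChar l2 (r.fc c) S → S.Finite → n ≤ S.ncard := by
  classical
  intro S hS hSfin
  set g : E2 × Bool → Option (E1 × Bool) := fun s =>
    if h : ∃ e' : E1, {c | s.1 ∈ l2 (r.fc c)} = {c | e' ∈ l1 c} then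
      some (h.choose, s.2) else none with hg
  set S' : Set (E1 × Bool) := {x | ∃ s ∈ S, g s = some x} with hS'
  -- key property of members of S'
  have hmem : ∀ x ∈ S', ∃ s ∈ S, ({c | s.1 ∈ l2 (r.fc c)} = {c | x.1 ∈ l1 c}) ∧ x.2 = s.2 := by
    rintro x ⟨s, hs, hgs⟩
    by_cases h : ∃ e' : E1, {c | s.1 ∈ l2 (r.fc c)} = {c | e' ∈ l1 c}
    · simp only [hg, dif_pos h] at hgs
      cases Option.some.inj hgs
      exact ⟨s, hs, h.choose_spec, rfl⟩
    · simp [hg, dif_neg h] at hgs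
  have hchar : ccUniqChar l1 c S' := by
    constructor
    · intro x hx
      obtain ⟨s, hs, hset, hb⟩ := hmem x hx
      have hf := hS.1 s hs
      unfold ccFits at hf ⊢
      have : c ∈ {c | s.1 ∈ l2 (r.fc c)} ↔ c ∈ {c | x.1 ∈ l1 c} := by rw [hset]
      rw [hb]
      exact (this.symm.trans hf)
    · intro c' hc'
      have hfit : ∀ s ∈ S, ccFits l2 (r.fc c') s := by
        intro s hs
        rcases r.cond2 s.1 with h1 | h2 | h3
        · have hb : s.2 = true := (hS.1 s hs).mp (h1 c)
          exact ⟨fun _ => hb, fun _ => h1 c'⟩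
        · have hb : s.2 ≠ true := fun hb => (h2 c) ((hS.1 s hs).mpr hb)
          exact ⟨fun h => absurd h (h2 c'), fun h => absurd h hb⟩
        · have hx : (h3.choose, s.2) ∈ S' := ⟨s, hs, by simp [hg, dif_pos h3]⟩
          have := hc' _ hx
          unfold ccFits at this ⊢
          have hiff : s.1 ∈ l2 (r.fc c') ↔ h3.choose ∈ l1 c' := by
            have := h3.choose_spec
            constructor
            · intro h; exact (this ▸ (Set.mem_setOf_eq ▸ h) : c' ∈ {c | h3.choose ∈ l1 c})
            · intro h; exact (this.symm ▸ (Set.mem_setOf_eq ▸ h) : c' ∈ {c | s.1 ∈ l2 (r.fc c)})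
          exact hiff.trans this
      have hl2 : l2 (r.fc c') = l2 (r.fc c) := hS.2 _ hfit
      ext x
      rw [r.cond1 c' x, r.cond1 c x, hl2]
  -- finiteness and cardinality
  have hsub : Option.some '' S' ⊆ g '' S := by
    rintro _ ⟨x, hx, rfl⟩
    obtain ⟨s, hs, hgs⟩ := hx
    exact ⟨s, hs, hgs⟩
  have hfin' : S'.Finite := by
    have : (Option.some '' S').Finite := (hSfin.image g).subset hsub
    exact (this.preimage (Option.some_injective _).injOn).subset
      (by intro x hx; exact ⟨x, hx, rfl⟩)
  calc n ≤ S'.ncard := hc S' hchar hfin'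
    _ = (Option.some '' S').ncard := (Set.ncard_image_of_injective _ (Option.some_injective _)).symm
    _ ≤ (g '' S).ncard := Set.ncard_le_ncard hsub (hSfin.image g)
    _ ≤ S.ncard := Set.ncard_image_le hSfin
end
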